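/- arXiv:2407.19423 — 4 statements merged into one kernel-verified Lean document; each statement's English description precedes it below -/
import Mathlib

section
/- Let K be a simplicial complex with m vertices that is tight over a field F. Then: (i) K is pure, i.e., every maximal simplex of K has dimension equal to dim(K); and (ii) for every simplex σ of K, the link Link_K σ is tight over F. -/
/-- An (abstract) simplicial complex: a collection of finite subsets of `ℕ`
closed under taking subsets. -/
def IsComplex (K : Finset (Finset ℕ)) : Prop :=
  ∀ σ ∈ K, ∀ τ ⊆ σ, τ ∈ K

/-- The vertex set of a complex: the union of all its simplices. -/
def verts (K : Finset (Finset ℕ)) : Finset ℕ := K.sup id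

/-- The space of (augmented) simplicial `j`-chains: formal `F`-linear combinations of
simplices of cardinality `j` (so chain degree `j` corresponds to dimension `j - 1`;
degree `0` is spanned by the empty simplex). -/
abbrev Chain (F : Type*) [Field F] (K : Finset (Finset ℕ)) (j : ℕ) : Type _ :=
  {σ // σ ∈ K.filter (fun σ => σ.card = j)} → F

/-- The simplicial boundary operator (of the augmented chain complex), with the usual
signs `(-1)^{position of the deleted vertex}`. -/
noncomputable def bdry (F : Type*) [Field F] (K : Finset (Finset ℕ)) (j : ℕ) :
    Chain F K (j + 1) →ₗ[F] Chain F K j where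
  toFun c := fun τ =>
    ∑ v ∈ verts K,
      if h : v ∉ τ.1 ∧ insert v τ.1 ∈ K.filter (fun σ => σ.card = j + 1) then
        (-1 : F) ^ ((τ.1.filter (fun u => u < v)).card) * c ⟨insert v τ.1, h.2⟩
      else 0
  map_add' c d := by
    funext τ
    show _ = (_ : F) + (_ : F)
    rw [← Finset.sum_add_distrib]
    refine Finset.sum_congr rfl fun v _ => ?_
    by_cases h : v ∉ τ.1 ∧ insert v τ.1 ∈ K.filter (fun σ => σ.card = j + 1)
    · rw [dif_pos h, dif_pos h, dif_pos h, ← mul_add]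
      rfl
    · rw [dif_neg h, dif_neg h, dif_neg h, add_zero]
  map_smul' a c := by
    funext τ
    show _ = a * _
    rw [Finset.mul_sum]
    refine Finset.sum_congr rfl fun v _ => ?_
    by_cases h : v ∉ τ.1 ∧ insert v τ.1 ∈ K.filter (fun σ => σ.card = j + 1)
    · rw [dif_pos h, dif_pos h]
      show _ * (a * _) = _
      ring
    · rw [dif_neg h, dif_neg h, mul_zero]

/-- The dimension of the `j`-th homology of the augmented simplicial chain complex of `K`.
Degree `j` corresponds to the reduced homology group `H̃_{j-1}` of the realization of `K`. -/
noncomputable def hBetti (F : Type*) [Field F] (K : Finset (Finset ℕ)) : ℕ → ℕ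
  | 0 => Module.finrank F (Chain F K 0) - Module.finrank F (LinearMap.range (bdry F K 0))
  | j + 1 =>
      Module.finrank F (LinearMap.ker (bdry F K j)) -
        Module.finrank F (LinearMap.range (bdry F K (j + 1)))

/-- The reduced total Betti number `t̃b(K; F) = ∑ i dim H̃ i (K; F)` of (the geometric
realization of) `K`, with the convention `t̃b(∅; F) = 1` (coming from `β̃₋₁(∅) = 1`;
note that if `K` is nonempty and closed under subsets then `∅ ∈ K` and the augmented
chain complex accounts for `β̃₋₁` automatically). -/
noncomputable def rtb (F : Type*) [Field F] (K : Finset (Finset ℕ)) : ℕ :=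
  if K = ∅ then 1 else ∑ j ∈ Finset.range ((verts K).card + 1), hBetti F K j

/-- The full subcomplex `K|_J` of `K` on a vertex set `J`. -/
def restr (K : Finset (Finset ℕ)) (J : Finset ℕ) : Finset (Finset ℕ) :=
  K.filter (fun σ => σ ⊆ J)

/-- The total bigraded Betti number `D̃(K; F) = ∑_{J ⊆ V} t̃b(K|_J; F)`
with respect to a ground vertex set `V`. -/
noncomputable def Dtilde (F : Type*) [Field F] (V : Finset ℕ) (K : Finset (Finset ℕ)) : ℕ :=
  ∑ J ∈ V.powerset, rtb F (restr K J)


/-- The `k`-skeleton `Δ^[m]_(k)` of the full simplex on the vertex set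
`[m] = {0, 1, …, m-1}`: all subsets of cardinality at most `k + 1`. -/
def skel (m k : ℕ) : Finset (Finset ℕ) :=
  (Finset.range m).powerset.filter (fun σ => σ.card ≤ k + 1)

/-- The `k`-skeleton of the full simplex on `[m]` for an integer `k`
(so `k = -1` gives the empty complex `{∅}`). -/
def skelZ (m : ℕ) (k : ℤ) : Finset (Finset ℕ) :=
  (Finset.range m).powerset.filter (fun σ => (σ.card : ℤ) ≤ k + 1)

/-- `Δ^[m]_(k)⟨d⟩`: the union of the `k`-skeleton of the full simplex on `[m]`
with the single `d`-simplex `{0, 1, …, d}` and all its faces. -/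
def skelD (m k d : ℕ) : Finset (Finset ℕ) :=
  skel m k ∪ (Finset.range (d + 1)).powerset

/-- `K` and `L` are isomorphic simplicial complexes: some injection of the vertex
set of `K` maps the simplices of `K` exactly onto the simplices of `L`. -/
def SIso (K L : Finset (Finset ℕ)) : Prop :=
  ∃ f : ℕ → ℕ, Set.InjOn f ↑(verts K) ∧ L = K.image (fun σ => σ.image f)

/-- `g(m,d) = ∑_{j=d+1}^{m} C(m,j)·C(j-1,d)`. -/
def g (m d : ℕ) : ℕ := ∑ j ∈ Finset.Icc (d + 1) m, m.choose j * (j - 1).choose d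

/-- The join `K * L` of two simplicial complexes (on disjoint vertex sets). -/
def sJoin (K L : Finset (Finset ℕ)) : Finset (Finset ℕ) :=
  (K ×ˢ L).image fun p => p.1 ∪ p.2

/-- A `d`-dimensional simplicial complex `K` with `m` vertices is tight over `F` if
`D̃(K;F) = 2^{m-d-1}` (note `m - d - 1 = m - (d+1)` and `d + 1 = max σ∈K |σ|`),
where `D̃` is computed with respect to the vertex set of `K`. -/
def IsTight (F : Type*) [Field F] (K : Finset (Finset ℕ)) : Prop :=
  Dtilde F (verts K) K = 2 ^ ((verts K).card - K.sup Finset.card)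

/-- The link of a simplex `σ` in `K`. -/
def linkK (K : Finset (Finset ℕ)) (σ : Finset ℕ) : Finset (Finset ℕ) :=
  K.filter (fun τ => Disjoint τ σ ∧ τ ∪ σ ∈ K)

/-- `K` is pure: every maximal simplex has the maximum cardinality `dim K + 1`. -/
def IsPure (K : Finset (Finset ℕ)) : Prop :=
  ∀ σ ∈ K, (∀ τ ∈ K, σ ⊆ τ → σ = τ) → σ.card = K.sup Finset.card

/-- A near-cone (with apex vertex `0`): for every simplex `S` with `0 ∉ S` and every
`j ∈ S`, `(S \ j) ∪ {0}` is again a simplex. -/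
def IsNearCone (Δ : Finset (Finset ℕ)) : Prop :=
  ∀ S ∈ Δ, 0 ∉ S → ∀ j ∈ S, insert 0 (S.erase j) ∈ Δ

/-- `B(Δ) = {S ∈ Δ : S ∪ {0} ∉ Δ}` for a near-cone `Δ` with apex `0`. -/
def BSet (Δ : Finset (Finset ℕ)) : Finset (Finset ℕ) :=
  Δ.filter (fun S => insert 0 S ∉ Δ)

/-- A Sperner family of the finite set `X`: a family of subsets of `X`, no member
containing another member. -/
def IsSperner (X : Finset ℕ) (F : Finset (Finset ℕ)) : Prop :=
  (∀ A ∈ F, A ⊆ X) ∧ ∀ A ∈ F, ∀ B ∈ F, A ⊆ B → A = B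

/-- The geometric realization of `K` is disconnected: the vertex set splits into two
nonempty parts such that every simplex lies entirely in one of the parts. -/
def IsDisconn (K : Finset (Finset ℕ)) : Prop :=
  ∃ A B : Finset ℕ, A.Nonempty ∧ B.Nonempty ∧ Disjoint A B ∧ A ∪ B = verts K ∧
    ∀ σ ∈ K, σ ⊆ A ∨ σ ⊆ B

/-- The boundary `∂Δ^A` of the full simplex on the vertex set `A`: all proper subsets
of `A`.  (For `|A| = 1` this is the empty complex `{∅}`.) -/
def bdSimplex (A : Finset ℕ) : Finset (Finset ℕ) := A.powerset.erase A



-- ================== development ==================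

section TL
variable (F : Type*) [Field F]

lemma TL.mem_verts {K : Finset (Finset ℕ)} {v : ℕ} : v ∈ verts K ↔ ∃ σ ∈ K, v ∈ σ := by
  simp [verts, Finset.mem_sup]

lemma TL.subset_verts {K : Finset (Finset ℕ)} {σ : Finset ℕ} (h : σ ∈ K) : σ ⊆ verts K :=
  Finset.le_sup (f := id) h

lemma TL.singleton_mem {K : Finset (Finset ℕ)} (hK : IsComplex K) {v : ℕ} (hv : v ∈ verts K) :
    {v} ∈ K := by
  obtain ⟨σ, hσ, hvσ⟩ := TL.mem_verts.1 hv
  exact hK σ hσ _ (Finset.singleton_subset_iff.2 hvσ)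

lemma TL.empty_mem {K : Finset (Finset ℕ)} (hK : IsComplex K) (hne : K.Nonempty) : ∅ ∈ K := by
  obtain ⟨σ, hσ⟩ := hne
  exact hK σ hσ _ (Finset.empty_subset _)

lemma TL.chain_rank (K : Finset (Finset ℕ)) (j : ℕ) :
    Module.finrank F (Chain F K j) = (K.filter (fun σ => σ.card = j)).card := by
  rw [Module.finrank_pi, Fintype.card_coe]

lemma TL.chain_rank_zero (K : Finset (Finset ℕ)) {j : ℕ} (h : (verts K).card < j) :
    Module.finrank F (Chain F K j) = 0 := by
  rw [TL.chain_rank]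
  rw [Finset.card_eq_zero, Finset.filter_eq_empty_iff]
  rintro σ hσ rfl
  exact absurd (Finset.card_le_card (TL.subset_verts hσ)) (by omega)

lemma TL.bdry_apply (K : Finset (Finset ℕ)) (j : ℕ) (c : Chain F K (j+1)) (τ) :
    bdry F K j c τ =
    ∑ v ∈ verts K,
      if h : v ∉ τ.1 ∧ insert v τ.1 ∈ K.filter (fun σ => σ.card = j + 1) then
        (-1 : F) ^ ((τ.1.filter (fun u => u < v)).card) * c ⟨insert v τ.1, h.2⟩
      else 0 := rfl

end TL

section TL2
variable (F : Type*) [Field F]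

lemma TL.sign_insert {τ : Finset ℕ} {v : ℕ} (w : ℕ) (hv : v ∉ τ) :
    (((insert v τ).filter (fun u => u < w)).card)
      = (τ.filter (fun u => u < w)).card + if v < w then 1 else 0 := by
  rw [Finset.filter_insert]
  split_ifs with h
  · rw [Finset.card_insert_of_notMem (fun hc => hv (Finset.mem_of_mem_filter _ hc))]
  · rw [add_zero]

lemma TL.bdry_sq {K : Finset (Finset ℕ)} (hK : IsComplex K) (j : ℕ) (c : Chain F K (j+2)) :
    bdry F K j (bdry F K (j+1) c) = 0 := by
  funext τ
  have hτ : τ.1.card = j := (Finset.mem_filter.1 τ.2).2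
  set G : ℕ × ℕ → F := fun p =>
    if h : p.1 ∉ τ.1 ∧ p.2 ∉ insert p.1 τ.1 ∧
        insert p.2 (insert p.1 τ.1) ∈ K.filter (fun σ => σ.card = j+2) then
      (-1 : F) ^ ((τ.1.filter (fun u => u < p.1)).card) *
        ((-1 : F) ^ (((insert p.1 τ.1).filter (fun u => u < p.2)).card) *
          c ⟨insert p.2 (insert p.1 τ.1), h.2.2⟩)
    else 0 with hG
  have hPQ : ∀ v w : ℕ, (v ∉ τ.1 ∧ w ∉ insert v τ.1 ∧
      insert w (insert v τ.1) ∈ K.filter (fun σ => σ.card = j+2)) →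
      v ∉ τ.1 ∧ insert v τ.1 ∈ K.filter (fun σ => σ.card = j+1) := by
    rintro v w ⟨h1, h2, h3⟩
    rw [Finset.mem_filter] at h3
    refine ⟨h1, Finset.mem_filter.2 ⟨hK _ h3.1 _ (Finset.subset_insert _ _), ?_⟩⟩
    rw [Finset.card_insert_of_notMem h1, hτ]
  have step : bdry F K j (bdry F K (j+1) c) τ = ∑ p ∈ (verts K) ×ˢ (verts K), G p := by
    rw [Finset.sum_product, TL.bdry_apply]
    refine Finset.sum_congr rfl fun v hv => ?_
    by_cases hP : v ∉ τ.1 ∧ insert v τ.1 ∈ K.filter (fun σ => σ.card = j + 1)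
    · rw [dif_pos hP, TL.bdry_apply, Finset.mul_sum]
      refine Finset.sum_congr rfl fun w hw => ?_
      by_cases hQ : w ∉ insert v τ.1 ∧
          insert w (insert v τ.1) ∈ K.filter (fun σ => σ.card = (j+1) + 1)
      · rw [dif_pos hQ]
        simp only [hG]
        rw [dif_pos ⟨hP.1, hQ.1, hQ.2⟩]
      · rw [dif_neg hQ, mul_zero]
        simp only [hG]
        rw [dif_neg (fun hc : _ ∧ _ => hQ ⟨hc.2.1, hc.2.2⟩)]
    · rw [dif_neg hP]
      symm
      refine Finset.sum_eq_zero fun w hw => ?_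
      simp only [hG]
      rw [dif_neg (fun hc => hP (hPQ v w hc))]
  rw [step]
  refine Finset.sum_involution (fun p _ => p.swap) ?_ ?_ (fun p hp => by
      rw [Finset.mem_product] at hp ⊢; exact ⟨hp.2, hp.1⟩) (fun p _ => rfl)
  · rintro ⟨v, w⟩ hp
    show G (v, w) + G (w, v) = 0
    by_cases hC : v ∉ τ.1 ∧ w ∉ insert v τ.1 ∧
        insert w (insert v τ.1) ∈ K.filter (fun σ => σ.card = j+2)
    · obtain ⟨h1, h2, h3⟩ := hC
      have hvw : w ≠ v := fun hc => h2 (hc ▸ Finset.mem_insert_self _ _)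
      have hwτ : w ∉ τ.1 := fun hc => h2 (Finset.mem_insert_of_mem hc)
      have hvw' : v ∉ insert w τ.1 := by
        simp only [Finset.mem_insert]
        push_neg
        exact ⟨fun hc => hvw hc.symm, h1⟩
      have hcomm : insert v (insert w τ.1) = insert w (insert v τ.1) :=
        Finset.insert_comm _ _ _
      have hC' : w ∉ τ.1 ∧ v ∉ insert w τ.1 ∧
          insert v (insert w τ.1) ∈ K.filter (fun σ => σ.card = j+2) := by
        refine ⟨hwτ, hvw', ?_⟩
        rw [hcomm]; exact h3
      simp only [hG]
      rw [dif_pos (show _ ∧ _ from ⟨h1, h2, h3⟩), dif_pos hC']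
      have hc : c ⟨insert v (insert w τ.1), hC'.2.2⟩ = c ⟨insert w (insert v τ.1), h3⟩ := by
        congr 1
        exact Subtype.ext hcomm
      rw [hc, TL.sign_insert w h1, TL.sign_insert v hwτ]
      rcases Nat.lt_or_ge v w with h | h
      · have h' : ¬ (w < v) := by omega
        have h'' : v ≠ w := by omega
        simp only [if_pos h, if_neg h']
        ring
      · have h'' : v ≠ w := fun hc => hvw hc.symm
        have h' : ¬ (v < w) := by omega
        have hwv : w < v := by omega
        simp only [if_neg h', if_pos hwv]
        ring
    · have hC' : ¬ (w ∉ τ.1 ∧ v ∉ insert w τ.1 ∧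
          insert v (insert w τ.1) ∈ K.filter (fun σ => σ.card = j+2)) := by
        rintro ⟨h1, h2, h3⟩
        have hvτ : v ∉ τ.1 := fun hc => h2 (Finset.mem_insert_of_mem hc)
        have hwv : w ∉ insert v τ.1 := by
          simp only [Finset.mem_insert]
          push_neg
          exact ⟨fun hc => h2 (hc ▸ Finset.mem_insert_self _ _), h1⟩
        refine hC ⟨hvτ, hwv, ?_⟩
        rwa [Finset.insert_comm] at h3
      simp only [hG]
      rw [dif_neg hC, dif_neg hC', add_zero]
  · rintro ⟨v, w⟩ hp hne
    show (v, w).swap ≠ (v, w)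
    intro hc
    have hwv : w = v := congrArg Prod.fst hc
    subst hwv
    apply hne
    simp only [hG]
    rw [dif_neg]
    rintro ⟨h1, h2, _⟩
    exact h2 (Finset.mem_insert_self _ _)
end TL2

section TL3
variable (F : Type*) [Field F]

noncomputable def TL.cyc (K : Finset (Finset ℕ)) : (j : ℕ) → Submodule F (Chain F K j)
  | 0 => ⊤
  | (j+1) => LinearMap.ker (bdry F K j)

lemma TL.range_le_cyc {K : Finset (Finset ℕ)} (hK : IsComplex K) (j : ℕ) :
    LinearMap.range (bdry F K j) ≤ TL.cyc F K j := by
  cases j with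
  | zero => exact le_top
  | succ i =>
      rintro x ⟨c, rfl⟩
      exact LinearMap.mem_ker.2 (by rw [TL.bdry_sq F hK i c]  )

lemma TL.hBetti_eq (K : Finset (Finset ℕ)) (j : ℕ) :
    hBetti F K j = Module.finrank F (TL.cyc F K j) -
      Module.finrank F (LinearMap.range (bdry F K j)) := by
  cases j with
  | zero => rw [hBetti, TL.cyc, finrank_top]
  | succ i => rfl

lemma TL.rank_le_of_le {M : Type*} [AddCommGroup M] [Module F M] [FiniteDimensional F M]
    {p q : Submodule F M} (h : p ≤ q) : Module.finrank F p ≤ Module.finrank F q :=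
  Submodule.finrank_mono h

lemma TL.sub_rank_zero {K : Finset (Finset ℕ)} {j : ℕ} (h : (verts K).card < j)
    (p : Submodule F (Chain F K j)) : Module.finrank F p = 0 := by
  have h1 := Submodule.finrank_le p
  rw [TL.chain_rank_zero F K h] at h1
  omega

lemma TL.hBetti_zero {K : Finset (Finset ℕ)} {j : ℕ} (h : (verts K).card < j) :
    hBetti F K j = 0 := by
  rw [TL.hBetti_eq]
  cases j with
  | zero => omega
  | succ i =>
      rw [TL.cyc]
      have : Module.finrank F (LinearMap.ker (bdry F K i)) = 0 := by
        have h1 := Submodule.finrank_le (LinearMap.ker (bdry F K i))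
        rw [TL.chain_rank_zero F K h] at h1
        omega
      omega

lemma TL.rtb_eq {K : Finset (Finset ℕ)} (hne : K ≠ ∅) {N : ℕ} (hN : (verts K).card + 1 ≤ N) :
    rtb F K = ∑ j ∈ Finset.range N, hBetti F K j := by
  rw [rtb, if_neg hne]
  refine Finset.sum_subset (Finset.range_subset_range.2 hN) fun j _ hj => ?_
  rw [Finset.mem_range, not_lt] at hj
  exact TL.hBetti_zero F (by omega)

lemma TL.rank_nullity (K : Finset (Finset ℕ)) (j : ℕ) :
    Module.finrank F (Chain F K (j+1)) =
      Module.finrank F (TL.cyc F K (j+1)) +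
        Module.finrank F (LinearMap.range (bdry F K j)) := by
  rw [TL.cyc, ← LinearMap.finrank_range_add_finrank_ker (bdry F K j), add_comm]

end TL3

section TL4
variable (F : Type*) [Field F]

def TL.Adel (X : Finset (Finset ℕ)) (v : ℕ) : Finset (Finset ℕ) :=
  X.filter (fun σ => v ∉ σ)

lemma TL.mem_link_iff {X : Finset (Finset ℕ)} {v : ℕ} {τ : Finset ℕ} :
    τ ∈ linkK X {v} ↔ τ ∈ X ∧ v ∉ τ ∧ insert v τ ∈ X := by
  unfold linkK
  rw [Finset.mem_filter, Finset.disjoint_singleton_right]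
  have h : τ ∪ {v} = insert v τ := by rw [Finset.union_comm, ← Finset.insert_eq]
  rw [h]

variable (X : Finset (Finset ℕ)) (v : ℕ)

lemma TL.Adel_subset : TL.Adel X v ⊆ X := Finset.filter_subset _ _

lemma TL.link_subset_Adel : linkK X {v} ⊆ TL.Adel X v := by
  intro τ hτ
  rw [TL.mem_link_iff] at hτ
  exact Finset.mem_filter.2 ⟨hτ.1, hτ.2.1⟩

lemma TL.memA_memX {j : ℕ} {σ : Finset ℕ}
    (h : σ ∈ (TL.Adel X v).filter (fun s => s.card = j)) :
    σ ∈ X.filter (fun s => s.card = j) := by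
  rw [Finset.mem_filter] at h ⊢
  exact ⟨TL.Adel_subset X v h.1, h.2⟩

lemma TL.memL_insert {j : ℕ} {τ : Finset ℕ}
    (h : τ ∈ (linkK X {v}).filter (fun s => s.card = j)) :
    insert v τ ∈ X.filter (fun s => s.card = j + 1) := by
  rw [Finset.mem_filter] at h ⊢
  obtain ⟨h1, h2⟩ := h
  rw [TL.mem_link_iff] at h1
  exact ⟨h1.2.2, by rw [Finset.card_insert_of_notMem h1.2.1, h2]⟩

def TL.sgn (w : ℕ) (τ : Finset ℕ) : F := (-1 : F) ^ ((τ.filter (fun u => u < w)).card)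

lemma TL.sgn_mul_self (w : ℕ) (τ : Finset ℕ) : TL.sgn F w τ * TL.sgn F w τ = 1 := by
  rw [TL.sgn, ← pow_add, ← two_mul, pow_mul, neg_one_sq, one_pow]

noncomputable def TL.pim (j : ℕ) : Chain F X j →ₗ[F] Chain F (TL.Adel X v) j where
  toFun c := fun σ => c ⟨σ.1, TL.memA_memX X v σ.2⟩
  map_add' _ _ := rfl
  map_smul' _ _ := rfl

noncomputable def TL.iota (j : ℕ) :
    Chain F (linkK X {v}) j →ₗ[F] Chain F (TL.Adel X v) j where
  toFun z := fun σ =>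
    if h : σ.1 ∈ (linkK X {v}).filter (fun s => s.card = j) then z ⟨σ.1, h⟩ else 0
  map_add' z w := by
    funext σ
    show _ = (_ : F) + _
    dsimp only
    by_cases h : σ.1 ∈ (linkK X {v}).filter (fun s => s.card = j)
    · rw [dif_pos h, dif_pos h, dif_pos h]; rfl
    · rw [dif_neg h, dif_neg h, dif_neg h, add_zero]
  map_smul' a z := by
    funext σ
    show _ = a * _
    dsimp only
    by_cases h : σ.1 ∈ (linkK X {v}).filter (fun s => s.card = j)
    · rw [dif_pos h, dif_pos h]; rfl
    · rw [dif_neg h, dif_neg h, mul_zero]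

noncomputable def TL.emap (j : ℕ) : Chain F X (j+1) →ₗ[F] Chain F (linkK X {v}) j where
  toFun c := fun τ => TL.sgn F v τ.1 * c ⟨insert v τ.1, TL.memL_insert X v τ.2⟩
  map_add' c d := by funext τ; show _ = (_ : F) + _; rw [← mul_add]; rfl
  map_smul' a c := by funext τ; show _ = a * _; show TL.sgn F v τ.1 * (a * _) = _; ring

noncomputable def TL.mixf (hX : IsComplex X) {j : ℕ} (a : Chain F (TL.Adel X v) (j+1))
    (z : Chain F (linkK X {v}) j) : Chain F X (j+1) := fun σ =>
  if h : v ∈ σ.1 then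
    TL.sgn F v (σ.1.erase v) *
      z ⟨σ.1.erase v, by
        obtain ⟨h1, h2⟩ := Finset.mem_filter.1 σ.2
        refine Finset.mem_filter.2 ⟨TL.mem_link_iff.2
          ⟨hX _ h1 _ (Finset.erase_subset _ _), Finset.notMem_erase _ _, ?_⟩, ?_⟩
        · rwa [Finset.insert_erase h]
        · rw [Finset.card_erase_of_mem h, h2]; rfl⟩
  else a ⟨σ.1, by
    obtain ⟨h1, h2⟩ := Finset.mem_filter.1 σ.2
    exact Finset.mem_filter.2 ⟨Finset.mem_filter.2 ⟨h1, h⟩, h2⟩⟩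

lemma TL.pim_mixf (hX : IsComplex X) {j : ℕ} (a : Chain F (TL.Adel X v) (j+1))
    (z : Chain F (linkK X {v}) j) : TL.pim F X v (j+1) (TL.mixf F X v hX a z) = a := by
  funext σ
  show TL.mixf F X v hX a z _ = _
  have hv : v ∉ σ.1 := (Finset.mem_filter.1 (Finset.mem_filter.1 σ.2).1).2
  rw [TL.mixf, dif_neg hv]

lemma TL.emap_mixf (hX : IsComplex X) {j : ℕ} (a : Chain F (TL.Adel X v) (j+1))
    (z : Chain F (linkK X {v}) j) : TL.emap F X v j (TL.mixf F X v hX a z) = z := by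
  funext τ
  show TL.sgn F v τ.1 * TL.mixf F X v hX a z _ = _
  have hv : v ∉ τ.1 := (TL.mem_link_iff.1 (Finset.mem_filter.1 τ.2).1).2.1
  rw [TL.mixf, dif_pos (Finset.mem_insert_self v τ.1)]
  have he : (insert v τ.1).erase v = τ.1 := Finset.erase_insert hv
  have hz : ∀ (s : Finset ℕ) (hs : s = τ.1)
      (h : s ∈ (linkK X {v}).filter (fun t => t.card = j)),
      z ⟨s, h⟩ = z τ := by
    rintro s rfl h
    congr
  rw [← mul_assoc]
  conv_lhs => rw [show TL.sgn F v ((insert v τ.1).erase v) = TL.sgn F v τ.1 by rw [he]]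
  rw [TL.sgn_mul_self, one_mul]
  exact hz _ he _

lemma TL.mixf_eq (hX : IsComplex X) {j : ℕ} (c : Chain F X (j+1)) :
    TL.mixf F X v hX (TL.pim F X v (j+1) c) (TL.emap F X v j c) = c := by
  funext σ
  rw [TL.mixf]
  by_cases h : v ∈ σ.1
  · rw [dif_pos h]
    show TL.sgn F v _ * (TL.sgn F v _ * c _) = _
    rw [← mul_assoc, TL.sgn_mul_self, one_mul]
    have : insert v (σ.1.erase v) = σ.1 := Finset.insert_erase h
    have hz : ∀ (s : Finset ℕ) (hs : s = σ.1) (hmem : s ∈ X.filter (fun t => t.card = j+1)),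
        c ⟨s, hmem⟩ = c σ := by
      rintro s rfl h; congr
    exact hz _ this _
  · rw [dif_neg h]
    rfl

lemma TL.joint_inj (hX : IsComplex X) {j : ℕ} (c : Chain F X (j+1))
    (h1 : TL.pim F X v (j+1) c = 0) (h2 : TL.emap F X v j c = 0) : c = 0 := by
  rw [← TL.mixf_eq F X v hX c, h1, h2]
  funext σ
  rw [TL.mixf]
  by_cases h : v ∈ σ.1
  · rw [dif_pos h]
    show TL.sgn F v _ * (0 : F) = _
    rw [mul_zero]; rfl
  · rw [dif_neg h]; rfl

lemma TL.pim0_inj (c : Chain F X 0) (h : TL.pim F X v 0 c = 0) : c = 0 := by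
  funext σ
  have hσ : σ.1 ∈ (TL.Adel X v).filter (fun s => s.card = 0) := by
    obtain ⟨h1, h2⟩ := Finset.mem_filter.1 σ.2
    have : σ.1 = ∅ := Finset.card_eq_zero.1 h2
    refine Finset.mem_filter.2 ⟨Finset.mem_filter.2 ⟨h1, ?_⟩, h2⟩
    rw [this]; exact Finset.notMem_empty v
  have := congrFun h ⟨σ.1, hσ⟩
  exact this

end TL4

section TL5
variable (F : Type*) [Field F]

lemma TL.chain_congr {K : Finset (Finset ℕ)} {j : ℕ} (c : Chain F K j) {s t : Finset ℕ}
    (h : s = t) (hs : s ∈ K.filter (fun u => u.card = j)) (ht : t ∈ K.filter (fun u => u.card = j)) :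
    c ⟨s, hs⟩ = c ⟨t, ht⟩ := by subst h; rfl

lemma TL.verts_mono {K K' : Finset (Finset ℕ)} (h : K ⊆ K') : verts K ⊆ verts K' := by
  intro w hw
  obtain ⟨σ, hσ, hwσ⟩ := TL.mem_verts.1 hw
  exact TL.mem_verts.2 ⟨σ, h hσ, hwσ⟩

variable (X : Finset (Finset ℕ)) (v : ℕ)

lemma TL.not_mem_verts_Adel : v ∉ verts (TL.Adel X v) := by
  intro hc
  obtain ⟨σ, hσ, hvσ⟩ := TL.mem_verts.1 hc
  exact (Finset.mem_filter.1 hσ).2 hvσ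

lemma TL.not_mem_verts_link : v ∉ verts (linkK X {v}) := fun hc =>
  TL.not_mem_verts_Adel X v (TL.verts_mono (TL.link_subset_Adel X v) hc)

lemma TL.vertsA_sub : verts (TL.Adel X v) ⊆ (verts X).erase v := fun w hw =>
  Finset.mem_erase.2 ⟨fun hc => TL.not_mem_verts_Adel X v (hc ▸ hw),
    TL.verts_mono (TL.Adel_subset X v) hw⟩

lemma TL.vertsL_sub : verts (linkK X {v}) ⊆ (verts X).erase v := fun w hw =>
  TL.vertsA_sub X v (TL.verts_mono (TL.link_subset_Adel X v) hw)

lemma TL.Adel_isComplex (hX : IsComplex X) : IsComplex (TL.Adel X v) := by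
  intro σ hσ τ hτ
  rw [TL.Adel, Finset.mem_filter] at hσ ⊢
  exact ⟨hX _ hσ.1 _ hτ, fun hc => hσ.2 (hτ hc)⟩

lemma TL.link_isComplex (hX : IsComplex X) : IsComplex (linkK X {v}) := by
  intro σ hσ τ hτ
  rw [TL.mem_link_iff] at hσ ⊢
  exact ⟨hX _ hσ.1 _ hτ, fun hc => hσ.2.1 (hτ hc),
    hX _ hσ.2.2 _ (Finset.insert_subset_insert _ hτ)⟩

lemma TL.bdry_pim (hv : {v} ∈ X) (j : ℕ) (c : Chain F X (j+1)) :
    TL.pim F X v j (bdry F X j c) =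
      bdry F (TL.Adel X v) j (TL.pim F X v (j+1) c) + TL.iota F X v j (TL.emap F X v j c) := by
  funext σ
  have hvX : v ∈ verts X := TL.mem_verts.2 ⟨{v}, hv, Finset.mem_singleton_self v⟩
  obtain ⟨hSA, hScard⟩ := Finset.mem_filter.1 σ.2
  obtain ⟨hSX, hvS⟩ := Finset.mem_filter.1 hSA
  show bdry F X j c ⟨σ.1, _⟩ = bdry F (TL.Adel X v) j (TL.pim F X v (j+1) c) σ + _
  rw [TL.bdry_apply, ← Finset.add_sum_erase _ _ hvX]
  have hterm1 : (if h : v ∉ σ.1 ∧ insert v σ.1 ∈ X.filter (fun s => s.card = j + 1) then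
      (-1 : F) ^ ((σ.1.filter (fun u => u < v)).card) * c ⟨insert v σ.1, h.2⟩
    else 0) = TL.iota F X v j (TL.emap F X v j c) σ := by
    show _ = dite _ _ _
    by_cases h : insert v σ.1 ∈ X.filter (fun s => s.card = j + 1)
    · rw [dif_pos ⟨hvS, h⟩, dif_pos (show σ.1 ∈ (linkK X {v}).filter (fun s => s.card = j) from
        Finset.mem_filter.2 ⟨TL.mem_link_iff.2 ⟨hSX, hvS, (Finset.mem_filter.1 h).1⟩, hScard⟩)]
      rfl
    · rw [dif_neg (fun hc => h hc.2), dif_neg (fun hc : σ.1 ∈ _ => h (TL.memL_insert X v hc))]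
  rw [hterm1, add_comm]
  congr 1
  rw [TL.bdry_apply]
  rw [Finset.sum_subset (TL.vertsA_sub X v)]
  · refine Finset.sum_congr rfl fun w hw => ?_
    have hwv : w ≠ v := (Finset.mem_erase.1 hw).1
    by_cases h : w ∉ σ.1 ∧ insert w σ.1 ∈ (TL.Adel X v).filter (fun s => s.card = j + 1)
    · rw [dif_pos h, dif_pos ⟨h.1, TL.memA_memX X v h.2⟩]
      rfl
    · rw [dif_neg h, dif_neg]
      rintro ⟨h1, h2⟩
      refine h ⟨h1, ?_⟩
      rw [Finset.mem_filter] at h2 ⊢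
      refine ⟨Finset.mem_filter.2 ⟨h2.1, ?_⟩, h2.2⟩
      simp only [Finset.mem_insert]
      push_neg
      exact ⟨fun hc => hwv hc.symm, hvS⟩
  · intro w hw hwA
    rw [dif_neg]
    rintro ⟨h1, h2⟩
    exact hwA (TL.mem_verts.2 ⟨insert w σ.1, (Finset.mem_filter.1 h2).1,
      Finset.mem_insert_self _ _⟩)

lemma TL.emap_bdry (hX : IsComplex X) (j : ℕ) (c : Chain F X (j+2)) :
    TL.emap F X v j (bdry F X (j+1) c) =
      - bdry F (linkK X {v}) j (TL.emap F X v (j+1) c) := by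
  funext τ
  obtain ⟨hTL, hTcard⟩ := Finset.mem_filter.1 τ.2
  obtain ⟨hTX, hvT, hiT⟩ := TL.mem_link_iff.1 hTL
  show TL.sgn F v τ.1 * bdry F X (j+1) c ⟨insert v τ.1, _⟩ = - bdry F (linkK X {v}) j _ τ
  rw [TL.bdry_apply, TL.bdry_apply, Finset.mul_sum, ← Finset.sum_neg_distrib]
  rw [Finset.sum_subset (TL.vertsL_sub X v)
    (s₁ := (verts (linkK X {v}))) (f := fun w => - (if h : w ∉ τ.1 ∧ insert w τ.1 ∈
      (linkK X {v}).filter (fun s => s.card = j + 1) then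
        (-1:F) ^ ((τ.1.filter (fun u => u < w)).card) * TL.emap F X v (j+1) c ⟨insert w τ.1, h.2⟩
      else 0))]
  · rw [← Finset.sum_erase (verts X) (f := fun w => TL.sgn F v τ.1 *
      (if h : w ∉ insert v τ.1 ∧ insert w (insert v τ.1) ∈ X.filter (fun s => s.card = j + 2) then
        (-1:F) ^ (((insert v τ.1).filter (fun u => u < w)).card) * c ⟨insert w (insert v τ.1), h.2⟩
      else 0)) (a := v) (by
        rw [dif_neg, mul_zero]
        rintro ⟨h1, _⟩
        exact h1 (Finset.mem_insert_self _ _))]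
    refine Finset.sum_congr rfl fun w hw => ?_
    obtain ⟨hwv, hwX⟩ := Finset.mem_erase.1 hw
    by_cases hC : w ∉ insert v τ.1 ∧ insert w (insert v τ.1) ∈ X.filter (fun s => s.card = j + 2)
    · obtain ⟨h1, h2⟩ := id hC
      have hwT : w ∉ τ.1 := fun hc => h1 (Finset.mem_insert_of_mem hc)
      have hcomm : insert w (insert v τ.1) = insert v (insert w τ.1) := Finset.insert_comm _ _ _
      have hC' : w ∉ τ.1 ∧ insert w τ.1 ∈ (linkK X {v}).filter (fun s => s.card = j + 1) := by
        refine ⟨hwT, Finset.mem_filter.2 ⟨TL.mem_link_iff.2 ⟨?_, ?_, ?_⟩, ?_⟩⟩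
        · exact hX _ (Finset.mem_filter.1 h2).1 _ (hcomm ▸ Finset.subset_insert _ _)
        · simp only [Finset.mem_insert]
          push_neg
          exact ⟨hwv.symm, hvT⟩
        · rw [← hcomm]; exact (Finset.mem_filter.1 h2).1
        · rw [Finset.card_insert_of_notMem hwT, hTcard]
      rw [dif_pos hC, dif_pos hC']
      show TL.sgn F v τ.1 * (_ * c _) = -(_ * (TL.sgn F v (insert w τ.1) * c _))
      rw [TL.chain_congr F c hcomm (ht := hcomm ▸ h2)]
      rw [TL.sgn, TL.sgn, TL.sign_insert w hvT, TL.sign_insert v hwT]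
      rcases Nat.lt_or_ge v w with h | h
      · have h' : ¬ (w < v) := by omega
        simp only [if_pos h, if_neg h']
        ring
      · have hlt : w < v := by omega
        have h' : ¬ (v < w) := by omega
        simp only [if_neg h', if_pos hlt]
        ring
    · rw [dif_neg hC, mul_zero, dif_neg, neg_zero]
      rintro ⟨h1, h2⟩
      rw [Finset.mem_filter] at h2
      obtain ⟨h2L, h2c⟩ := h2
      obtain ⟨h3, h4, h5⟩ := TL.mem_link_iff.1 h2L
      refine hC ⟨?_, ?_⟩
      · simp only [Finset.mem_insert]
        push_neg
        exact ⟨hwv, h1⟩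
      · rw [Finset.mem_filter]
        constructor
        · rw [Finset.insert_comm]; exact h5
        · rw [Finset.insert_comm, Finset.card_insert_of_notMem h4,
            Finset.card_insert_of_notMem h1, hTcard]
  · intro w hw hwL
    rw [dif_neg, neg_zero]
    rintro ⟨h1, h2⟩
    exact hwL (TL.mem_verts.2 ⟨insert w τ.1, (Finset.mem_filter.1 h2).1,
      Finset.mem_insert_self _ _⟩)

lemma TL.bdry_iota (hX : IsComplex X) (j : ℕ) (z : Chain F (linkK X {v}) (j+1)) :
    bdry F (TL.Adel X v) j (TL.iota F X v (j+1) z) =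
      TL.iota F X v j (bdry F (linkK X {v}) j z) := by
  funext σ
  obtain ⟨hSA, hScard⟩ := Finset.mem_filter.1 σ.2
  show bdry F (TL.Adel X v) j _ σ = dite _ _ _
  rw [TL.bdry_apply]
  by_cases hS : σ.1 ∈ (linkK X {v}).filter (fun s => s.card = j)
  · rw [dif_pos hS, TL.bdry_apply]
    rw [Finset.sum_subset (TL.verts_mono (TL.link_subset_Adel X v))
      (f := fun w => if h : w ∉ σ.1 ∧ insert w σ.1 ∈
          (linkK X {v}).filter (fun s => s.card = j + 1) then
        (-1:F) ^ ((σ.1.filter (fun u => u < w)).card) * z ⟨insert w σ.1, h.2⟩ else 0)]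
    · refine Finset.sum_congr rfl fun w hw => ?_
      by_cases hC : w ∉ σ.1 ∧ insert w σ.1 ∈ (linkK X {v}).filter (fun s => s.card = j + 1)
      · rw [dif_pos hC, dif_pos ⟨hC.1, Finset.mem_filter.2
          ⟨TL.link_subset_Adel X v (Finset.mem_filter.1 hC.2).1, (Finset.mem_filter.1 hC.2).2⟩⟩]
        show _ * TL.iota F X v (j+1) z ⟨insert w σ.1, _⟩ = _
        show _ * dite _ _ _ = _
        rw [dif_pos hC.2]
      · rw [dif_neg hC]
        by_cases hD : w ∉ σ.1 ∧ insert w σ.1 ∈ (TL.Adel X v).filter (fun s => s.card = j + 1)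
        · rw [dif_pos hD]
          show _ * dite _ _ _ = _
          rw [dif_neg (fun hc => hC ⟨hD.1, hc⟩), mul_zero]
        · rw [dif_neg hD]
    · intro w hw hwL
      rw [dif_neg]
      rintro ⟨h1, h2⟩
      exact hwL (TL.mem_verts.2 ⟨insert w σ.1, (Finset.mem_filter.1 h2).1,
        Finset.mem_insert_self _ _⟩)
  · rw [dif_neg hS]
    refine Finset.sum_eq_zero fun w hw => ?_
    by_cases hD : w ∉ σ.1 ∧ insert w σ.1 ∈ (TL.Adel X v).filter (fun s => s.card = j + 1)
    · rw [dif_pos hD]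
      show _ * dite _ _ _ = _
      rw [dif_neg, mul_zero]
      intro hc
      refine hS (Finset.mem_filter.2 ⟨?_, hScard⟩)
      exact TL.link_isComplex X v hX _ (Finset.mem_filter.1 hc).1 _ (Finset.subset_insert _ _)
    · rw [dif_neg hD]
end TL5

section TL6
variable (F : Type*) [Field F]
variable (X : Finset (Finset ℕ)) (v : ℕ)

lemma TL.card_decomp (hX : IsComplex X) (j : ℕ) :
    (X.filter (fun s => s.card = j + 1)).card =
      ((TL.Adel X v).filter (fun s => s.card = j + 1)).card +
        ((linkK X {v}).filter (fun s => s.card = j)).card := by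
  classical
  have hsplit : ((X.filter (fun s => s.card = j + 1)).filter (fun s => v ∉ s)).card +
      ((X.filter (fun s => s.card = j + 1)).filter (fun s => ¬ v ∉ s)).card =
      (X.filter (fun s => s.card = j + 1)).card :=
    Finset.card_filter_add_card_filter_not _
  have h1 : (X.filter (fun s => s.card = j + 1)).filter (fun s => v ∉ s) =
      (TL.Adel X v).filter (fun s => s.card = j + 1) := by
    ext s
    simp only [Finset.mem_filter, TL.Adel]
    tauto
  have h2 : ((X.filter (fun s => s.card = j + 1)).filter (fun s => ¬ v ∉ s)).card =
      ((linkK X {v}).filter (fun s => s.card = j)).card := by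
    refine Finset.card_bij' (fun s _ => s.erase v) (fun t _ => insert v t) ?_ ?_ ?_ ?_
    · intro s hs
      simp only [Finset.mem_filter, not_not] at hs
      obtain ⟨⟨hsX, hsc⟩, hvs⟩ := hs
      refine Finset.mem_filter.2 ⟨TL.mem_link_iff.2
        ⟨hX _ hsX _ (Finset.erase_subset _ _), Finset.notMem_erase _ _, ?_⟩, ?_⟩
      · rwa [Finset.insert_erase hvs]
      · rw [Finset.card_erase_of_mem hvs, hsc]
        rfl
    · intro t ht
      simp only [Finset.mem_filter, not_not] at ht ⊢
      obtain ⟨htL, htc⟩ := ht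
      obtain ⟨htX, hvt, hins⟩ := TL.mem_link_iff.1 htL
      exact ⟨⟨hins, by rw [Finset.card_insert_of_notMem hvt, htc]⟩, Finset.mem_insert_self _ _⟩
    · intro s hs
      simp only [Finset.mem_filter, not_not] at hs
      exact Finset.insert_erase hs.2
    · intro t ht
      simp only [Finset.mem_filter] at ht
      exact Finset.erase_insert (TL.mem_link_iff.1 ht.1).2.1
  rw [h1] at hsplit
  omega

lemma TL.chain_decomp (hX : IsComplex X) (j : ℕ) :
    Module.finrank F (Chain F X (j+1)) =
      Module.finrank F (Chain F (TL.Adel X v) (j+1)) +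
        Module.finrank F (Chain F (linkK X {v}) j) := by
  rw [TL.chain_rank, TL.chain_rank, TL.chain_rank]
  exact TL.card_decomp X v hX j

lemma TL.chain_zero_eq :
    Module.finrank F (Chain F X 0) = Module.finrank F (Chain F (TL.Adel X v) 0) := by
  rw [TL.chain_rank, TL.chain_rank]
  congr 1
  ext s
  simp only [Finset.mem_filter, TL.Adel]
  constructor
  · rintro ⟨h1, h2⟩
    refine ⟨⟨h1, ?_⟩, h2⟩
    rw [Finset.card_eq_zero.1 h2]
    exact Finset.notMem_empty v
  · rintro ⟨⟨h1, _⟩, h2⟩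
    exact ⟨h1, h2⟩

noncomputable def TL.Wsub (j : ℕ) : Submodule F (Chain F (linkK X {v}) j) :=
  TL.cyc F (linkK X {v}) j ⊓
    Submodule.comap (TL.iota F X v j) (LinearMap.range (bdry F (TL.Adel X v) j))

lemma TL.mixf_mem_ker (hX : IsComplex X) (hv : {v} ∈ X) {j : ℕ} (a : Chain F (TL.Adel X v) (j+1))
    (z : Chain F (linkK X {v}) j)
    (h1 : bdry F (TL.Adel X v) j a + TL.iota F X v j z = 0)
    (h2 : z ∈ TL.cyc F (linkK X {v}) j) :
    bdry F X j (TL.mixf F X v hX a z) = 0 := by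
  have hp : TL.pim F X v j (bdry F X j (TL.mixf F X v hX a z)) = 0 := by
    rw [TL.bdry_pim F X v hv j, TL.pim_mixf, TL.emap_mixf]
    exact h1
  cases j with
  | zero => exact TL.pim0_inj F X v _ hp
  | succ i =>
      refine TL.joint_inj F X v hX _ hp ?_
      rw [TL.emap_bdry F X v hX i, TL.emap_mixf]
      rw [TL.cyc] at h2
      rw [LinearMap.mem_ker.1 h2, neg_zero]

end TL6

section TL7
variable (F : Type*) [Field F]
variable (X : Finset (Finset ℕ)) (v : ℕ)

set_option synthInstance.maxHeartbeats 400000 in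
set_option maxHeartbeats 800000 in
lemma TL.ker_dim (hX : IsComplex X) (hv : {v} ∈ X) (j : ℕ) :
    Module.finrank F (TL.cyc F X (j+1)) =
      Module.finrank F (TL.cyc F (TL.Adel X v) (j+1)) +
        Module.finrank F (TL.Wsub F X v j) := by
  classical
  set E : ↥(LinearMap.ker (bdry F X j)) →ₗ[F] Chain F (linkK X {v}) j :=
    (TL.emap F X v j).comp (LinearMap.ker (bdry F X j)).subtype with hE
  have hrn := LinearMap.finrank_range_add_finrank_ker E
  have hrange : LinearMap.range E = TL.Wsub F X v j := by
    apply le_antisymm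
    · rintro _ ⟨⟨c, hc⟩, rfl⟩
      have hc' : bdry F X j c = 0 := LinearMap.mem_ker.1 hc
      have hEc : E ⟨c, hc⟩ = TL.emap F X v j c := rfl
      rw [hEc]
      refine Submodule.mem_inf.2 ⟨?_, ?_⟩
      · cases j with
        | zero => exact Submodule.mem_top
        | succ i =>
            rw [TL.cyc]
            rw [LinearMap.mem_ker]
            have := TL.emap_bdry F X v hX i c
            rw [hc', map_zero] at this
            exact neg_eq_zero.1 this.symm
      · rw [Submodule.mem_comap]
        have := TL.bdry_pim F X v hv j c
        rw [hc', map_zero] at this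
        refine ⟨-(TL.pim F X v (j+1) c), ?_⟩
        rw [map_neg]
        exact neg_eq_of_add_eq_zero_right this.symm
    · rintro z hz
      obtain ⟨hz1, hz2⟩ := Submodule.mem_inf.1 hz
      obtain ⟨a, ha⟩ := Submodule.mem_comap.1 hz2
      have hmem : bdry F X j (TL.mixf F X v hX (-a) z) = 0 := by
        refine TL.mixf_mem_ker F X v hX hv _ _ ?_ hz1
        rw [map_neg, ha]
        abel
      exact ⟨⟨TL.mixf F X v hX (-a) z, LinearMap.mem_ker.2 hmem⟩, TL.emap_mixf F X v hX _ _⟩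
  have hker : Module.finrank F (LinearMap.ker E) =
      Module.finrank F (TL.cyc F (TL.Adel X v) (j+1)) := by
    have hmem : ∀ x : ↥(LinearMap.ker E),
        TL.pim F X v (j+1) (x.1.1) ∈ TL.cyc F (TL.Adel X v) (j+1) := by
      rintro ⟨⟨c, hc⟩, hc2⟩
      rw [TL.cyc, LinearMap.mem_ker]
      have h2 := TL.bdry_pim F X v hv j c
      rw [LinearMap.mem_ker.1 hc, map_zero] at h2
      have he : TL.emap F X v j c = 0 := hc2
      rw [he, map_zero, add_zero] at h2
      exact h2.symm
    have heq : (↥(LinearMap.ker E)) ≃ₗ[F] ↥(TL.cyc F (TL.Adel X v) (j+1)) := by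
      refine LinearEquiv.ofBijective (LinearMap.codRestrict _
        ((TL.pim F X v (j+1)).comp
          ((LinearMap.ker (bdry F X j)).subtype.comp (LinearMap.ker E).subtype)) hmem)
        ⟨?_, ?_⟩
      · rintro ⟨⟨c, hc⟩, hc2⟩ ⟨⟨d, hd⟩, hd2⟩ hxy
        have h1 : TL.pim F X v (j+1) c = TL.pim F X v (j+1) d := congrArg Subtype.val hxy
        have hec : TL.emap F X v j c = 0 := hc2
        have hed : TL.emap F X v j d = 0 := hd2
        have hcd : c = d := by
          rw [← TL.mixf_eq F X v hX c, ← TL.mixf_eq F X v hX d, h1, hec, hed]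
        exact Subtype.ext (Subtype.ext hcd)
      · intro a
        have ha : bdry F (TL.Adel X v) j a.1 = 0 := a.2
        have hmemk : bdry F X j (TL.mixf F X v hX a.1 0) = 0 := by
          refine TL.mixf_mem_ker F X v hX hv _ _ ?_ (Submodule.zero_mem _)
          rw [map_zero, add_zero, ha]
        refine ⟨⟨⟨TL.mixf F X v hX a.1 0, LinearMap.mem_ker.2 hmemk⟩, ?_⟩, ?_⟩
        · show TL.emap F X v j _ = 0
          exact TL.emap_mixf F X v hX _ _
        · refine Subtype.ext ?_
          show TL.pim F X v (j+1) (TL.mixf F X v hX a.1 0) = a.1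
          exact TL.pim_mixf F X v hX _ _
    exact LinearEquiv.finrank_eq heq
  have hfr : Module.finrank F (TL.cyc F X (j+1)) =
      Module.finrank F (LinearMap.ker (bdry F X j)) := rfl
  rw [hfr, ← hrn, hrange, hker]
  omega

lemma TL.deg_ineq (hX : IsComplex X) (j : ℕ) :
    Module.finrank F (TL.cyc F (linkK X {v}) j) +
      Module.finrank F (LinearMap.range (bdry F (TL.Adel X v) j)) ≤
    Module.finrank F (TL.Wsub F X v j) +
      Module.finrank F (TL.cyc F (TL.Adel X v) j) := by
  classical
  set R := LinearMap.range (bdry F (TL.Adel X v) j) with hR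
  set φ : ↥(TL.cyc F (linkK X {v}) j) →ₗ[F] (Chain F (TL.Adel X v) j ⧸ R) :=
    (R.mkQ.comp (TL.iota F X v j)).comp (TL.cyc F (linkK X {v}) j).subtype with hφ
  have h1 := LinearMap.finrank_range_add_finrank_ker φ
  have hkφ : LinearMap.ker φ =
      Submodule.comap (TL.cyc F (linkK X {v}) j).subtype (TL.Wsub F X v j) := by
    ext x
    rw [LinearMap.mem_ker, Submodule.mem_comap]
    show R.mkQ (TL.iota F X v j x.1) = 0 ↔ _
    rw [Submodule.mkQ_apply, Submodule.Quotient.mk_eq_zero]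
    rw [TL.Wsub, Submodule.mem_inf, Submodule.mem_comap]
    exact ⟨fun h => ⟨x.2, h⟩, fun h => h.2⟩
  have hkdim : Module.finrank F (LinearMap.ker φ) = Module.finrank F (TL.Wsub F X v j) := by
    rw [hkφ]
    exact LinearEquiv.finrank_eq (Submodule.comapSubtypeEquivOfLe inf_le_left)
  have hcycmem : ∀ x : ↥(TL.cyc F (linkK X {v}) j),
      TL.iota F X v j x.1 ∈ TL.cyc F (TL.Adel X v) j := by
    intro x
    cases j with
    | zero => exact Submodule.mem_top
    | succ i =>
        have hx : bdry F (linkK X {v}) i x.1 = 0 := LinearMap.mem_ker.1 x.2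
        show TL.iota F X v (i+1) x.1 ∈ LinearMap.ker (bdry F (TL.Adel X v) i)
        rw [LinearMap.mem_ker, TL.bdry_iota F X v hX i x.1, hx, map_zero]
  have hrφ : LinearMap.range φ ≤ Submodule.map R.mkQ (TL.cyc F (TL.Adel X v) j) := by
    rintro _ ⟨x, rfl⟩
    exact ⟨TL.iota F X v j x.1, hcycmem x, rfl⟩
  have hmap : Module.finrank F (Submodule.map R.mkQ (TL.cyc F (TL.Adel X v) j)) +
      Module.finrank F R = Module.finrank F (TL.cyc F (TL.Adel X v) j) := by
    set ψ : ↥(TL.cyc F (TL.Adel X v) j) →ₗ[F] (Chain F (TL.Adel X v) j ⧸ R) :=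
      R.mkQ.comp (TL.cyc F (TL.Adel X v) j).subtype with hψ
    have h2 := LinearMap.finrank_range_add_finrank_ker ψ
    have hrψ : LinearMap.range ψ = Submodule.map R.mkQ (TL.cyc F (TL.Adel X v) j) := by
      rw [hψ, LinearMap.range_comp, Submodule.range_subtype]
    have hkψ : LinearMap.ker ψ = Submodule.comap (TL.cyc F (TL.Adel X v) j).subtype R := by
      rw [hψ, LinearMap.ker_comp, Submodule.ker_mkQ]
    have hkd : Module.finrank F (LinearMap.ker ψ) = Module.finrank F R := by
      rw [hkψ]
      exact LinearEquiv.finrank_eq (Submodule.comapSubtypeEquivOfLe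
        (TL.range_le_cyc F (TL.Adel_isComplex X v hX) j))
    rw [hrψ, hkd] at h2
    exact h2
  have hle : Module.finrank F (LinearMap.range φ) ≤
      Module.finrank F (Submodule.map R.mkQ (TL.cyc F (TL.Adel X v) j)) :=
    Submodule.finrank_mono hrφ
  omega

end TL7

section TL8
variable (F : Type*) [Field F]

lemma TL.rtb_cast {K : Finset (Finset ℕ)} (hK : IsComplex K) (hne : K ≠ ∅) {N : ℕ}
    (hN : (verts K).card + 1 ≤ N) :
    (rtb F K : ℤ) = ∑ j ∈ Finset.range N,
      ((Module.finrank F (TL.cyc F K j) : ℤ) -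
        (Module.finrank F (LinearMap.range (bdry F K j)) : ℤ)) := by
  rw [TL.rtb_eq F hne hN, Nat.cast_sum]
  refine Finset.sum_congr rfl fun j _ => ?_
  rw [TL.hBetti_eq]
  have hle := Submodule.finrank_mono (TL.range_le_cyc F hK j)
  omega

lemma TL.core (X : Finset (Finset ℕ)) (v : ℕ) (hX : IsComplex X) (hv : {v} ∈ X) :
    rtb F (linkK X {v}) ≤ rtb F (TL.Adel X v) + rtb F X := by
  classical
  have hvX : v ∈ verts X := TL.mem_verts.2 ⟨{v}, hv, Finset.mem_singleton_self v⟩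
  have hXne : X ≠ ∅ := Finset.ne_empty_of_mem hv
  have hempty : ∅ ∈ X := hX _ hv _ (Finset.empty_subset _)
  have hAne : TL.Adel X v ≠ ∅ :=
    Finset.ne_empty_of_mem (Finset.mem_filter.2 ⟨hempty, Finset.notMem_empty v⟩)
  have hLne : linkK X {v} ≠ ∅ := by
    refine Finset.ne_empty_of_mem (TL.mem_link_iff.2 ⟨hempty, Finset.notMem_empty v, ?_⟩)
    show insert v ∅ ∈ X
    rwa [Finset.insert_empty]
  set M := (verts X).card with hM
  have hcardA : (verts (TL.Adel X v)).card + 1 ≤ M + 1 := by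
    have := Finset.card_le_card (TL.verts_mono (TL.Adel_subset X v))
    omega
  have hcardL : (verts (linkK X {v})).card < M := by
    have h1 := Finset.card_le_card (TL.vertsL_sub X v)
    rw [Finset.card_erase_of_mem hvX] at h1
    have h2 : 0 < M := Finset.card_pos.2 ⟨v, hvX⟩
    omega
  have eX := TL.rtb_cast F hX hXne (le_refl (M+1))
  have eA := TL.rtb_cast F (TL.Adel_isComplex X v hX) hAne hcardA
  have eL := TL.rtb_cast F (TL.link_isComplex X v hX) hLne (by omega : (verts (linkK X {v})).card + 1 ≤ M + 1)
  -- pointwise facts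
  have E2 : ∀ j : ℕ, Module.finrank F (LinearMap.range (bdry F X j)) +
      Module.finrank F (TL.Wsub F X v j) =
      Module.finrank F (LinearMap.range (bdry F (TL.Adel X v) j)) +
        Module.finrank F (Chain F (linkK X {v}) j) := by
    intro j
    have h1 := TL.rank_nullity F X j
    have h2 := TL.rank_nullity F (TL.Adel X v) j
    have h3 := TL.chain_decomp F X v hX j
    have h4 := TL.ker_dim F X v hX hv j
    omega
  have E4 : ∀ j : ℕ, Module.finrank F (TL.cyc F (linkK X {v}) j) +
      Module.finrank F (LinearMap.range (bdry F (TL.Adel X v) j)) ≤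
      Module.finrank F (TL.Wsub F X v j) +
        Module.finrank F (TL.cyc F (TL.Adel X v) j) := TL.deg_ineq F X v hX
  have hwM : Module.finrank F (TL.Wsub F X v M) = 0 := by
    refine TL.sub_rank_zero F ?_ _
    omega
  -- summed quantities
  set a1 := ∑ j ∈ Finset.range (M+1), (Module.finrank F (TL.cyc F X j) : ℤ) with ha1
  set a2 := ∑ j ∈ Finset.range (M+1),
    (Module.finrank F (LinearMap.range (bdry F X j)) : ℤ) with ha2
  set b1 := ∑ j ∈ Finset.range (M+1), (Module.finrank F (TL.cyc F (TL.Adel X v) j) : ℤ) with hb1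
  set b2 := ∑ j ∈ Finset.range (M+1),
    (Module.finrank F (LinearMap.range (bdry F (TL.Adel X v) j)) : ℤ) with hb2
  set c1 := ∑ j ∈ Finset.range (M+1), (Module.finrank F (TL.cyc F (linkK X {v}) j) : ℤ) with hc1
  set c2 := ∑ j ∈ Finset.range (M+1),
    (Module.finrank F (LinearMap.range (bdry F (linkK X {v}) j)) : ℤ) with hc2
  set d := ∑ j ∈ Finset.range (M+1), (Module.finrank F (Chain F (linkK X {v}) j) : ℤ) with hd
  set e := ∑ j ∈ Finset.range (M+1), (Module.finrank F (TL.Wsub F X v j) : ℤ) with he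
  -- E1 summed : a1 = b1 + (e - w M) = b1 + e
  have hE1 : a1 = b1 + ∑ j ∈ Finset.range M, (Module.finrank F (TL.Wsub F X v j) : ℤ) := by
    rw [ha1, hb1, Finset.sum_range_succ' _ M, Finset.sum_range_succ' (fun j =>
      (Module.finrank F (TL.cyc F (TL.Adel X v) j) : ℤ)) M]
    have hz0 : Module.finrank F (TL.cyc F X 0) = Module.finrank F (TL.cyc F (TL.Adel X v) 0) := by
      show Module.finrank F (⊤ : Submodule F (Chain F X 0)) =
        Module.finrank F (⊤ : Submodule F (Chain F (TL.Adel X v) 0))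
      rw [finrank_top, finrank_top]
      exact TL.chain_zero_eq F X v
    have hstep : ∀ j, (Module.finrank F (TL.cyc F X (j+1)) : ℤ) =
        (Module.finrank F (TL.cyc F (TL.Adel X v) (j+1)) : ℤ) +
          (Module.finrank F (TL.Wsub F X v j) : ℤ) := by
      intro j
      rw [TL.ker_dim F X v hX hv j]
      push_cast
      ring
    rw [hz0]
    rw [Finset.sum_congr rfl (fun j _ => hstep j)]
    rw [Finset.sum_add_distrib]
    ring
  have hesplit : e = ∑ j ∈ Finset.range M, (Module.finrank F (TL.Wsub F X v j) : ℤ) := by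
    rw [he, Finset.sum_range_succ, hwM]
    push_cast
    ring
  have hE2 : a2 + e = b2 + d := by
    rw [ha2, he, hb2, hd, ← Finset.sum_add_distrib, ← Finset.sum_add_distrib]
    refine Finset.sum_congr rfl fun j _ => ?_
    have := E2 j
    push_cast
    omega
  have hE3 : d = c1 + ∑ j ∈ Finset.range M,
      (Module.finrank F (LinearMap.range (bdry F (linkK X {v}) j)) : ℤ) := by
    rw [hd, hc1, Finset.sum_range_succ' _ M, Finset.sum_range_succ' (fun j =>
      (Module.finrank F (TL.cyc F (linkK X {v}) j) : ℤ)) M]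
    have h0 : Module.finrank F (Chain F (linkK X {v}) 0) =
        Module.finrank F (TL.cyc F (linkK X {v}) 0) := by
      show Module.finrank F (Chain F (linkK X {v}) 0) =
        Module.finrank F (⊤ : Submodule F (Chain F (linkK X {v}) 0))
      rw [finrank_top]
    have hstep : ∀ j, (Module.finrank F (Chain F (linkK X {v}) (j+1)) : ℤ) =
        (Module.finrank F (TL.cyc F (linkK X {v}) (j+1)) : ℤ) +
          (Module.finrank F (LinearMap.range (bdry F (linkK X {v}) j)) : ℤ) := by
      intro j
      rw [TL.rank_nullity F (linkK X {v}) j]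
      push_cast
      ring
    rw [h0, Finset.sum_congr rfl (fun j _ => hstep j), Finset.sum_add_distrib]
    ring
  have hE4 : c1 + b2 ≤ e + b1 := by
    rw [hc1, hb2, he, hb1, ← Finset.sum_add_distrib, ← Finset.sum_add_distrib]
    refine Finset.sum_le_sum fun j _ => ?_
    have := E4 j
    push_cast
    omega
  have hc2split : ∑ j ∈ Finset.range M,
      (Module.finrank F (LinearMap.range (bdry F (linkK X {v}) j)) : ℤ) ≤ c2 := by
    rw [hc2, Finset.sum_range_succ]
    have : (0:ℤ) ≤ (Module.finrank F (LinearMap.range (bdry F (linkK X {v}) M)) : ℤ) := by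
      positivity
    omega
  -- final assembly
  have goalZ : (rtb F (linkK X {v}) : ℤ) ≤ (rtb F (TL.Adel X v) : ℤ) + (rtb F X : ℤ) := by
    rw [eX, eA, eL]
    rw [Finset.sum_sub_distrib, Finset.sum_sub_distrib, Finset.sum_sub_distrib]
    rw [← ha1, ← ha2, ← hb1, ← hb2, ← hc1, ← hc2]
    have h1 : a1 = b1 + (e) := by rw [hE1, ← hesplit]
    linarith
  exact_mod_cast goalZ
end TL8

section TL9
variable (F : Type*) [Field F]

lemma TL.restr_isComplex {K : Finset (Finset ℕ)} (hK : IsComplex K) (J : Finset ℕ) :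
    IsComplex (restr K J) := by
  intro σ hσ τ hτ
  rw [restr, Finset.mem_filter] at hσ ⊢
  exact ⟨hK _ hσ.1 _ hτ, hτ.trans hσ.2⟩

lemma TL.mem_restr {K : Finset (Finset ℕ)} {J σ : Finset ℕ} :
    σ ∈ restr K J ↔ σ ∈ K ∧ σ ⊆ J := Finset.mem_filter

lemma TL.Adel_restr {K : Finset (Finset ℕ)} {J : Finset ℕ} {v : ℕ} (hvJ : v ∉ J) :
    TL.Adel (restr K (insert v J)) v = restr K J := by
  ext σ
  rw [TL.Adel, Finset.mem_filter, TL.mem_restr, TL.mem_restr]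
  constructor
  · rintro ⟨⟨h1, h2⟩, h3⟩
    exact ⟨h1, (Finset.subset_insert_iff_of_notMem h3).1 h2⟩
  · rintro ⟨h1, h2⟩
    exact ⟨⟨h1, h2.trans (Finset.subset_insert _ _)⟩, fun hc => hvJ (h2 hc)⟩

lemma TL.link_restr {K : Finset (Finset ℕ)} {J : Finset ℕ} {v : ℕ} (hvJ : v ∉ J) :
    linkK (restr K (insert v J)) {v} = restr (linkK K {v}) J := by
  ext τ
  rw [TL.mem_link_iff, TL.mem_restr, TL.mem_restr, TL.mem_restr, TL.mem_link_iff]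
  constructor
  · rintro ⟨⟨h1, h2⟩, h3, h4, h5⟩
    exact ⟨⟨h1, h3, h4⟩, (Finset.subset_insert_iff_of_notMem h3).1 h2⟩
  · rintro ⟨⟨h1, h2, h3⟩, h4⟩
    refine ⟨⟨h1, h4.trans (Finset.subset_insert _ _)⟩, h2, h3,
      Finset.insert_subset_insert _ h4⟩

lemma TL.Dtilde_link_le {K : Finset (Finset ℕ)} (hK : IsComplex K) {v : ℕ} (hv : {v} ∈ K)
    {V : Finset ℕ} (hvV : v ∈ V) :
    Dtilde F (V.erase v) (linkK K {v}) ≤ Dtilde F V K := by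
  rw [Dtilde, Dtilde]
  conv_rhs => rw [show V = insert v (V.erase v) from (Finset.insert_erase hvV).symm]
  rw [Finset.sum_powerset_insert (Finset.notMem_erase v V), ← Finset.sum_add_distrib]
  refine Finset.sum_le_sum ?_
  intro J hJ
  have hvJ : v ∉ J := fun hc => Finset.notMem_erase v V ((Finset.mem_powerset.1 hJ) hc)
  have hv' : {v} ∈ restr K (insert v J) := TL.mem_restr.2 ⟨hv, by
    simp [Finset.singleton_subset_iff]⟩
  have hcore := TL.core F (restr K (insert v J)) v (TL.restr_isComplex hK _) hv'
  rw [TL.Adel_restr hvJ, TL.link_restr hvJ] at hcore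
  exact hcore
end TL9

section TL10
variable (F : Type*) [Field F]

lemma TL.restr_of_extra {Y : Finset (Finset ℕ)} {J : Finset ℕ} {w : ℕ} (hw : w ∉ verts Y) :
    restr Y (insert w J) = restr Y J := by
  ext σ
  rw [TL.mem_restr, TL.mem_restr]
  constructor
  · rintro ⟨h1, h2⟩
    refine ⟨h1, (Finset.subset_insert_iff_of_notMem fun hc => hw ?_).1 h2⟩
    exact TL.subset_verts h1 hc
  · rintro ⟨h1, h2⟩
    exact ⟨h1, h2.trans (Finset.subset_insert _ _)⟩

lemma TL.Dtilde_extend (Y : Finset (Finset ℕ)) :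
    ∀ (k : ℕ) (W : Finset ℕ), verts Y ⊆ W → W.card = (verts Y).card + k →
      Dtilde F W Y = 2^k * Dtilde F (verts Y) Y := by
  intro k
  induction k with
  | zero =>
      intro W hsub hcard
      have : W = verts Y := (Finset.eq_of_subset_of_card_le hsub (by omega)).symm
      rw [this, pow_zero, one_mul]
  | succ k ih =>
      intro W hsub hcard
      have hex : ∃ w ∈ W, w ∉ verts Y := by
        by_contra hc
        push_neg at hc
        have := Finset.card_le_card (fun x hx => hc x hx)
        omega
      obtain ⟨w, hwW, hwY⟩ := hex
      have hW : W = insert w (W.erase w) := (Finset.insert_erase hwW).symm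
      rw [Dtilde]
      conv_lhs => rw [hW]
      rw [Finset.sum_powerset_insert (Finset.notMem_erase w W)]
      have hsame : ∀ J ∈ (W.erase w).powerset, rtb F (restr Y (insert w J)) =
          rtb F (restr Y J) := fun J _ => by rw [TL.restr_of_extra hwY]
      rw [Finset.sum_congr rfl hsame]
      have hih := ih (W.erase w) (Finset.subset_erase.2 ⟨hsub, hwY⟩)
        (by rw [Finset.card_erase_of_mem hwW]; omega)
      rw [Dtilde] at hih
      rw [hih]
      ring

lemma TL.rtb_emptycomplex : rtb F (∅ : Finset (Finset ℕ)) = 1 := by rw [rtb, if_pos rfl]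

lemma TL.rtb_point : rtb F ({∅} : Finset (Finset ℕ)) = 1 := by
  have hv : verts ({∅} : Finset (Finset ℕ)) = ∅ := by
    rw [verts, Finset.sup_singleton]
    rfl
  rw [rtb, if_neg (by simp), hv]
  rw [Finset.card_empty, Nat.zero_add, Finset.range_one, Finset.sum_singleton, TL.hBetti_eq]
  have h1 : Module.finrank F (Chain F ({∅} : Finset (Finset ℕ)) 0) = 1 := by
    rw [TL.chain_rank]
    rw [show ({∅} : Finset (Finset ℕ)).filter (fun σ => σ.card = 0) = {∅} by
      ext σ; simp [Finset.card_eq_zero]]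
    rfl
  have h1' : Module.finrank F (TL.cyc F ({∅} : Finset (Finset ℕ)) 0) = 1 := by
    show Module.finrank F (⊤ : Submodule F (Chain F ({∅} : Finset (Finset ℕ)) 0)) = 1
    rw [finrank_top]
    exact h1
  have h2 : Module.finrank F (LinearMap.range (bdry F ({∅} : Finset (Finset ℕ)) 0)) = 0 := by
    have hle := LinearMap.finrank_range_le (bdry F ({∅} : Finset (Finset ℕ)) 0)
    have : Module.finrank F (Chain F ({∅} : Finset (Finset ℕ)) (0+1)) = 0 := by
      rw [TL.chain_rank]
      rw [show ({∅} : Finset (Finset ℕ)).filter (fun σ => σ.card = 1) = ∅ by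
        ext σ; simp +contextual [Finset.card_eq_zero]]
      rfl
    omega
  omega

lemma TL.sup_card_le {K : Finset (Finset ℕ)} : K.sup Finset.card ≤ (verts K).card := by
  refine Finset.sup_le fun σ hσ => Finset.card_le_card (TL.subset_verts hσ)

lemma TL.link_sup_lt {K : Finset (Finset ℕ)} {v : ℕ} (hv : {v} ∈ K) :
    (linkK K {v}).sup Finset.card + 1 ≤ K.sup Finset.card := by
  have h1 : 1 ≤ K.sup Finset.card := by
    have := Finset.le_sup (f := Finset.card) hv
    simpa using this
  have h2 : (linkK K {v}).sup Finset.card ≤ K.sup Finset.card - 1 := by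
    refine Finset.sup_le fun τ hτ => ?_
    obtain ⟨h3, h4, h5⟩ := TL.mem_link_iff.1 hτ
    have := Finset.le_sup (f := Finset.card) h5
    rw [Finset.card_insert_of_notMem h4] at this
    omega
  omega

lemma TL.lower : ∀ (n : ℕ) (Y : Finset (Finset ℕ)), IsComplex Y → (verts Y).card = n →
    2 ^ ((verts Y).card) ≤ 2 ^ (Y.sup Finset.card) * Dtilde F (verts Y) Y := by
  intro n
  induction n using Nat.strong_induction_on with
  | _ n ih =>
    intro Y hY hn
    rcases Nat.eq_zero_or_pos n with h0 | hpos
    · -- verts Y = ∅, so Y = ∅ or Y = {∅}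
      subst h0
      have hve : verts Y = ∅ := Finset.card_eq_zero.1 hn
      have hD : Dtilde F (verts Y) Y = rtb F (restr Y ∅) := by
        rw [hve, Dtilde, Finset.powerset_empty, Finset.sum_singleton]
      rcases Finset.eq_empty_or_nonempty Y with hYe | hYne
      · subst hYe
        rw [hD, show restr (∅ : Finset (Finset ℕ)) ∅ = ∅ from rfl, TL.rtb_emptycomplex]
        simp [hve]
      · have hYeq : Y = {∅} := by
          apply Finset.Subset.antisymm
          · intro σ hσ
            have := TL.subset_verts hσ
            rw [hve, Finset.subset_empty] at this
            simp [this]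
          · intro σ hσ
            rw [Finset.mem_singleton] at hσ
            subst hσ
            exact TL.empty_mem hY hYne
        subst hYeq
        have hr : restr ({∅} : Finset (Finset ℕ)) ∅ = {∅} := by
          ext σ
          simp +contextual [TL.mem_restr, Finset.subset_empty, TL.empty_mem]
        rw [hD, hr, TL.rtb_point]
        have hsup : ({∅} : Finset (Finset ℕ)).sup Finset.card = 0 := by simp
        simp [hve, hsup]
    · -- pick a vertex in a maximum simplex
      have hYne : Y.Nonempty := by
        rcases Finset.eq_empty_or_nonempty Y with h | h
        · exfalso; subst h; rw [show verts (∅ : Finset (Finset ℕ)) = ∅ from rfl] at hn; simp at hn; omega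
        · exact h
      obtain ⟨σ₀, hσ₀, hσ₀c⟩ := Finset.exists_mem_eq_sup Y hYne Finset.card
      have hs1 : 1 ≤ Y.sup Finset.card := by
        have hvne : (verts Y).Nonempty := Finset.card_pos.1 (by omega)
        obtain ⟨u, hu⟩ := hvne
        have := Finset.le_sup (f := Finset.card) (TL.singleton_mem hY hu)
        simpa using this
      have hσ₀ne : σ₀.Nonempty := by
        rw [← Finset.card_pos, ← hσ₀c]
        omega
      obtain ⟨v, hvσ₀⟩ := hσ₀ne
      have hvK : {v} ∈ Y := hY _ hσ₀ _ (Finset.singleton_subset_iff.2 hvσ₀)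
      have hvV : v ∈ verts Y := TL.mem_verts.2 ⟨σ₀, hσ₀, hvσ₀⟩
      set L := linkK Y {v} with hL
      set s := Y.sup Finset.card with hs
      set m := (verts Y).card with hm
      -- sup of link equals s - 1
      have hsL : L.sup Finset.card = s - 1 := by
        have hub := TL.link_sup_lt (K := Y) hvK
        rw [← hL, ← hs] at hub
        have hlb : σ₀.erase v ∈ L := by
          rw [hL, TL.mem_link_iff]
          exact ⟨hY _ hσ₀ _ (Finset.erase_subset _ _), Finset.notMem_erase _ _,
            by rwa [Finset.insert_erase hvσ₀]⟩
        have := Finset.le_sup (f := Finset.card) hlb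
        rw [Finset.card_erase_of_mem hvσ₀, ← hσ₀c] at this
        omega
      have hLcard : (verts L).card < m := by
        have h1 := Finset.card_le_card (TL.vertsL_sub Y v)
        rw [Finset.card_erase_of_mem hvV] at h1
        rw [← hL, ← hm] at h1
        have : 0 < m := by omega
        omega
      have hLcomplex : IsComplex L := TL.link_isComplex Y v hY
      have hih := ih (verts L).card (by omega) L hLcomplex rfl
      have hvsub : verts L ⊆ (verts Y).erase v := by rw [hL]; exact TL.vertsL_sub Y v
      have hext := TL.Dtilde_extend F L (((verts Y).erase v).card - (verts L).card)
        ((verts Y).erase v) hvsub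
        (by
          have := Finset.card_le_card hvsub
          omega)
      have hlink := TL.Dtilde_link_le F hY hvK hvV
      rw [← hL] at hlink
      -- assemble: 2^m ≤ 2^s * Dtilde F (verts Y) Y
      have hcarderase : ((verts Y).erase v).card = m - 1 := by
        rw [Finset.card_erase_of_mem hvV]
      have hsLm : L.sup Finset.card ≤ (verts L).card := TL.sup_card_le
      -- chain of inequalities
      calc 2 ^ m = 2 * 2 ^ (m - 1) := by
            rw [← pow_succ']
            congr 1
            omega
        _ = 2 * (2 ^ ((m - 1) - (verts L).card) * 2 ^ ((verts L).card)) := by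
            have hu : (verts L).card ≤ m - 1 := by
              have := Finset.card_le_card hvsub
              rw [hcarderase] at this
              exact this
            rw [← pow_add, Nat.sub_add_cancel hu]
        _ ≤ 2 * (2 ^ ((m - 1) - (verts L).card) * (2 ^ (L.sup Finset.card) * Dtilde F (verts L) L)) := by
            have := hih
            have h2 : (0:ℕ) < 2 ^ ((m - 1) - (verts L).card) := Nat.pow_pos (by omega)
            exact Nat.mul_le_mul_left 2 (Nat.mul_le_mul_left _ hih)
        _ = 2 ^ (L.sup Finset.card + 1) * (2 ^ ((m - 1) - (verts L).card) * Dtilde F (verts L) L) := by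
            ring
        _ = 2 ^ s * (2 ^ ((m - 1) - (verts L).card) * Dtilde F (verts L) L) := by
            rw [hsL]
            congr 2
            omega
        _ = 2 ^ s * Dtilde F ((verts Y).erase v) L := by
            rw [hext, hcarderase]
        _ ≤ 2 ^ s * Dtilde F (verts Y) Y := Nat.mul_le_mul_left _ hlink
end TL10

section TL11
variable (F : Type*) [Field F]

lemma TL.vertex_tight {K : Finset (Finset ℕ)} (hK : IsComplex K) (ht : IsTight F K)
    {v : ℕ} (hv : v ∈ verts K) :
    IsTight F (linkK K {v}) ∧ (linkK K {v}).sup Finset.card + 1 = K.sup Finset.card := by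
  have hvK : {v} ∈ K := TL.singleton_mem hK hv
  set L := linkK K {v} with hL
  set m := (verts K).card with hm
  set s := K.sup Finset.card with hs
  set u := (verts L).card with hu
  set sL := L.sup Finset.card with hsL
  set DU := Dtilde F (verts L) L with hDU
  have hm0 : 0 < m := Finset.card_pos.2 ⟨v, hv⟩
  have f1 : sL + 1 ≤ s := by rw [hsL, hs, hL]; exact TL.link_sup_lt hvK
  have f2 : u ≤ m - 1 := by
    have h1 := Finset.card_le_card (show verts L ⊆ (verts K).erase v from TL.vertsL_sub K v)
    rw [Finset.card_erase_of_mem hv] at h1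
    exact h1
  have f3 : sL ≤ u := TL.sup_card_le
  have f4 : s ≤ m := TL.sup_card_le
  have f5 : Dtilde F ((verts K).erase v) L ≤ 2 ^ (m - s) := by
    rw [← ht]
    exact TL.Dtilde_link_le F hK hvK hv
  have f6 : Dtilde F ((verts K).erase v) L = 2 ^ ((m - 1) - u) * DU := by
    have := TL.Dtilde_extend F L (((verts K).erase v).card - u) ((verts K).erase v)
      (TL.vertsL_sub K v) (by
        have := Finset.card_le_card (show verts L ⊆ (verts K).erase v from TL.vertsL_sub K v)
        omega)
    rw [this, Finset.card_erase_of_mem hv]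
  have f7 : 2 ^ u ≤ 2 ^ sL * DU := TL.lower F u L (TL.link_isComplex K v hK) rfl
  -- deduce sL = s - 1
  have key : 2 ^ (m - 1) ≤ 2 ^ (sL + (m - s)) := by
    calc 2 ^ (m-1) = 2 ^ ((m-1) - u) * 2 ^ u := by
          rw [← pow_add, Nat.sub_add_cancel f2]
      _ ≤ 2 ^ ((m-1) - u) * (2 ^ sL * DU) := Nat.mul_le_mul_left _ f7
      _ = 2 ^ sL * (2 ^ ((m-1) - u) * DU) := by ring
      _ ≤ 2 ^ sL * 2 ^ (m - s) := Nat.mul_le_mul_left _ (f6 ▸ f5)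
      _ = 2 ^ (sL + (m - s)) := by rw [← pow_add]
  have hexp : m - 1 ≤ sL + (m - s) := (Nat.pow_le_pow_iff_right (by omega)).1 key
  have hsLs : sL = s - 1 := by omega
  have hseq : sL + 1 = s := by omega
  refine ⟨?_, hseq⟩
  -- tightness of L
  have hupper : DU ≤ 2 ^ (u - sL) := by
    have h1 : 2 ^ ((m-1) - u) * DU ≤ 2 ^ ((m-1) - u) * 2 ^ (u - sL) := by
      rw [← pow_add]
      have hE : (m-1) - u + (u - sL) = m - s := by omega
      rw [hE, ← f6]
      exact f5
    exact Nat.le_of_mul_le_mul_left h1 (Nat.pow_pos (by omega))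
  have hlower : 2 ^ (u - sL) ≤ DU := by
    have h1 : 2 ^ sL * 2 ^ (u - sL) ≤ 2 ^ sL * DU := by
      rw [← pow_add, Nat.add_sub_cancel' f3]
      exact f7
    exact Nat.le_of_mul_le_mul_left h1 (Nat.pow_pos (by omega))
  have : DU = 2 ^ (u - sL) := le_antisymm hupper hlower
  rw [IsTight]
  show Dtilde F (verts L) L = 2 ^ ((verts L).card - L.sup Finset.card)
  rw [← hDU, ← hu, ← hsL]
  exact this

lemma TL.link_empty {K : Finset (Finset ℕ)} : linkK K ∅ = K := by
  rw [linkK]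
  refine Finset.filter_true_of_mem fun τ hτ => ⟨Finset.disjoint_empty_right τ, by
    rwa [Finset.union_empty]⟩

lemma TL.link_link {K : Finset (Finset ℕ)} (hK : IsComplex K) {σ : Finset ℕ} {v : ℕ}
    (hv : v ∈ σ) (hσ : σ ∈ K) :
    linkK K σ = linkK (linkK K {v}) (σ.erase v) := by
  ext τ
  rw [linkK, linkK, Finset.mem_filter, Finset.mem_filter]
  constructor
  · rintro ⟨h1, h2, h3⟩
    have hvτ : v ∉ τ := fun hc => (Finset.disjoint_left.1 h2) hc hv
    have hins : insert v (τ ∪ σ.erase v) = τ ∪ σ := by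
      rw [← Finset.union_insert, Finset.insert_erase hv]
    refine ⟨TL.mem_link_iff.2 ⟨h1, hvτ, hK _ h3 _ ?_⟩,
      Finset.disjoint_of_subset_right (Finset.erase_subset _ _) h2, TL.mem_link_iff.2
        ⟨hK _ h3 _ ?_, ?_, ?_⟩⟩
    · exact Finset.insert_subset (Finset.mem_union_right _ hv) Finset.subset_union_left
    · exact Finset.union_subset_union_right (Finset.erase_subset _ _)
    · simp only [Finset.mem_union]
      push_neg
      exact ⟨hvτ, Finset.notMem_erase _ _⟩
    · rw [hins]
      exact h3
  · rintro ⟨h1, h2, h3⟩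
    obtain ⟨h4, h5, h6⟩ := TL.mem_link_iff.1 h1
    obtain ⟨h7, h8, h9⟩ := TL.mem_link_iff.1 h3
    have hins : insert v (τ ∪ σ.erase v) = τ ∪ σ := by
      rw [← Finset.union_insert, Finset.insert_erase hv]
    refine ⟨h4, ?_, ?_⟩
    · have : Disjoint τ (insert v (σ.erase v)) :=
        Finset.disjoint_insert_right.2 ⟨h5, h2⟩
      rwa [Finset.insert_erase hv] at this
    · rw [← hins]
      exact h9

lemma TL.pure : ∀ (n : ℕ) (K : Finset (Finset ℕ)), IsComplex K → IsTight F K →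
    (verts K).card = n → IsPure K := by
  intro n
  induction n using Nat.strong_induction_on with
  | _ n ih =>
    intro K hK ht hn σ hσ hmax
    by_cases hσe : σ = ∅
    · subst hσe
      have hsup : K.sup Finset.card = 0 := by
        refine Nat.le_zero.1 (Finset.sup_le fun τ hτ => ?_)
        rw [← hmax τ hτ (Finset.empty_subset τ)]
        simp
      simp [hsup]
    · obtain ⟨v, hvσ⟩ := Finset.nonempty_iff_ne_empty.2 hσe
      have hvK : v ∈ verts K := TL.mem_verts.2 ⟨σ, hσ, hvσ⟩
      obtain ⟨htL, hsup⟩ := TL.vertex_tight F hK ht hvK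
      have hm0 : 0 < (verts K).card := Finset.card_pos.2 ⟨v, hvK⟩
      have hσ' : σ.erase v ∈ linkK K {v} := TL.mem_link_iff.2
        ⟨hK _ hσ _ (Finset.erase_subset _ _), Finset.notMem_erase _ _,
          by rwa [Finset.insert_erase hvσ]⟩
      have hmax' : ∀ τ ∈ linkK K {v}, σ.erase v ⊆ τ → σ.erase v = τ := by
        intro τ hτ hsub
        obtain ⟨h1, h2, h3⟩ := TL.mem_link_iff.1 hτ
        have hστ : σ ⊆ insert v τ := by
          intro x hx
          rcases eq_or_ne x v with rfl | hxv
          · exact Finset.mem_insert_self _ _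
          · exact Finset.mem_insert_of_mem (hsub (Finset.mem_erase.2 ⟨hxv, hx⟩))
        have := hmax (insert v τ) h3 hστ
        rw [this, Finset.erase_insert h2]
      have hLcard : (verts (linkK K {v})).card < n := by
        have h1 := Finset.card_le_card (TL.vertsL_sub K v)
        rw [Finset.card_erase_of_mem hvK] at h1
        omega
      have hres := ih (verts (linkK K {v})).card (by omega) (linkK K {v})
        (TL.link_isComplex K v hK) htL rfl (σ.erase v) hσ' hmax'
      rw [Finset.card_erase_of_mem hvσ] at hres
      have hσc : 0 < σ.card := Finset.card_pos.2 ⟨v, hvσ⟩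
      omega

lemma TL.link_tight : ∀ (n : ℕ) (K : Finset (Finset ℕ)) (σ : Finset ℕ), IsComplex K →
    IsTight F K → σ ∈ K → σ.card = n → IsTight F (linkK K σ) := by
  intro n
  induction n with
  | zero =>
      intro K σ hK ht hσ hcard
      rw [Finset.card_eq_zero.1 hcard, TL.link_empty]
      exact ht
  | succ n ihn =>
      intro K σ hK ht hσ hcard
      have hσne : σ.Nonempty := Finset.card_pos.1 (by omega)
      obtain ⟨v, hvσ⟩ := hσne
      have hvK : v ∈ verts K := TL.mem_verts.2 ⟨σ, hσ, hvσ⟩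
      obtain ⟨htL, _⟩ := TL.vertex_tight F hK ht hvK
      have hσ' : σ.erase v ∈ linkK K {v} := TL.mem_link_iff.2
        ⟨hK _ hσ _ (Finset.erase_subset _ _), Finset.notMem_erase _ _,
          by rwa [Finset.insert_erase hvσ]⟩
      have := ihn (linkK K {v}) (σ.erase v) (TL.link_isComplex K v hK) htL hσ'
        (by rw [Finset.card_erase_of_mem hvσ, hcard]; rfl)
      rwa [TL.link_link hK hvσ hσ]
end TL11


/-- A tight complex is pure, and all its links are tight. -/
theorem stmt14 (F : Type*) [Field F] (m : ℕ) (K : Finset (Finset ℕ))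
    (hK : IsComplex K) (hm : (verts K).card = m) (ht : IsTight F K) :
    IsPure K ∧ ∀ σ ∈ K, IsTight F (linkK K σ) := by
  constructor
  · exact TL.pure F (verts K).card K hK ht rfl
  · intro σ hσ
    exact TL.link_tight F σ.card K σ hK ht hσ rfl
end

section
/- For each integer m ≥ 1, the function d ↦ g(m,d) on {0,1,…,m-1} attains its maximum at d = ⌊(m-1)/3⌋ and at no other value of d; that is, g(m,d) < g(m,⌊(m-1)/3⌋) for every 0 ≤ d ≤ m-1 with d ≠ ⌊(m-1)/3⌋. -/
namespace St17

def Uf (m : ℕ) : ℕ → ℤ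
  | 0 => (m : ℤ) - 4
  | d + 1 => (m.choose (d + 2) : ℤ) - 2 * (m.choose (d + 1) : ℤ) - 2 * Uf m d

lemma Uf_zero (m : ℕ) : Uf m 0 = (m : ℤ) - 4 := rfl

lemma Uf_succ (m d : ℕ) :
    Uf m (d + 1) = (m.choose (d + 2) : ℤ) - 2 * (m.choose (d + 1) : ℤ) - 2 * Uf m d := rfl

lemma Uf_pascal : ∀ d m, Uf (m + 1) (d + 1) = Uf m (d + 1) + Uf m d := by
  intro d
  induction d with
  | zero =>
    intro m
    rw [Uf_succ, Uf_succ, Uf_zero, Uf_zero, Nat.choose_succ_succ' m 1, Nat.choose_one_right,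
      Nat.choose_one_right]
    push_cast
    ring
  | succ d ih =>
    intro m
    rw [Uf_succ (m + 1) (d + 1), ih m, Nat.choose_succ_succ' m (d + 2),
      Nat.choose_succ_succ' m (d + 1)]
    push_cast
    linear_combination (-1 : ℤ) * Uf_succ m d - Uf_succ m (d + 1)

lemma Uf_diag : ∀ d, Uf (d + 1) d = -1 - 2 * (-1 : ℤ) ^ d ∧
    Uf (d + 2) d = -(d : ℤ) - 1 - (-1 : ℤ) ^ d := by
  intro d
  induction d with
  | zero =>
    constructor <;> · rw [Uf_zero]; norm_num
  | succ d ih =>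
    have e1 : Uf (d + 2) (d + 1) = -1 - 2 * (-1 : ℤ) ^ (d + 1) := by
      rw [Uf_succ, ih.2, Nat.choose_self, Nat.choose_succ_self_right]
      push_cast
      ring
    refine ⟨e1, ?_⟩
    rw [show d + 1 + 2 = (d + 2) + 1 by ring, Uf_pascal, e1, ih.2]
    push_cast
    ring

def SignProp (d : ℕ) : Prop :=
  (∀ m, d + 2 ≤ m → m ≤ 3 * d + 3 → Uf m d ≤ -1) ∧
  (0 ≤ Uf (3 * d + 4) d ∧ (1 ≤ d → 1 ≤ Uf (3 * d + 4) d)) ∧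
  (∀ m, 3 * d + 5 ≤ m → 1 ≤ Uf m d)

lemma signs : ∀ d, SignProp d := by
  intro d
  induction d using Nat.strong_induction_on with
  | _ d ih =>
  match d with
  | 0 =>
    refine ⟨?_, ⟨?_, ?_⟩, ?_⟩
    · intro m h1 h2; rw [Uf_zero]; omega
    · rw [Uf_zero]; norm_num
    · omega
    · intro m h1; rw [Uf_zero]; omega
  | (d + 1) =>
    obtain ⟨N', ⟨P0', P0''⟩, P1'⟩ := ih d (Nat.lt_succ_self d)
    -- boundary identity at m = 3d+5
    have hbd : (Nat.choose (3 * d + 5) (d + 2) : ℤ) = 2 * Nat.choose (3 * d + 5) (d + 1) := by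
      have h := Nat.choose_succ_right_eq (3 * d + 5) (d + 1)
      have h2 : 3 * d + 5 - (d + 1) = 2 * (d + 2) := by omega
      rw [h2] at h
      have : (3 * d + 5).choose (d + 2) * (d + 2) = 2 * (3 * d + 5).choose (d + 1) * (d + 2) := by
        rw [h]; ring
      have := Nat.eq_of_mul_eq_mul_right (by omega) this
      exact_mod_cast this
    have hUbd : Uf (3 * d + 5) (d + 1) = -2 * Uf (3 * d + 5) d := by
      rw [show 3 * d + 5 = 3 * d + 5 from rfl, Uf_succ, hbd]; ring
    have hu1 : 1 ≤ Uf (3 * d + 5) d := P1' _ (by omega)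
    have hU33 : Uf (3 * d + 6) (d + 1) = -Uf (3 * d + 5) d := by
      rw [show 3 * d + 6 = (3 * d + 5) + 1 by ring, Uf_pascal, hUbd]; ring
    have Nlow : ∀ m, d + 3 ≤ m → m ≤ 3 * d + 4 → Uf m (d + 1) ≤ -1 := by
      intro m hm
      induction m, hm using Nat.le_induction with
      | base =>
        intro _
        have hdg := (Uf_diag (d + 1)).2
        rw [show d + 3 = (d + 1) + 2 by ring, hdg]
        rcases Nat.even_or_odd (d + 1) with h | h
        · rw [h.neg_one_pow]; push_cast; omega
        · rw [h.neg_one_pow]; push_cast; omega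
      | succ m hm ihm =>
        intro hle
        rw [Uf_pascal]
        have h1 : Uf m (d + 1) ≤ -1 := ihm (by omega)
        have h2 : Uf m d ≤ -1 := N' m (by omega) (by omega)
        linarith
    have N1 : ∀ m, (d + 1) + 2 ≤ m → m ≤ 3 * (d + 1) + 3 → Uf m (d + 1) ≤ -1 := by
      intro m h1 h2
      have : m ≤ 3 * d + 4 ∨ m = 3 * d + 5 ∨ m = 3 * d + 6 := by omega
      rcases this with h | h | h
      · exact Nlow m (by omega) h
      · rw [h, hUbd]; linarith
      · rw [h, hU33]; linarith
    have P0v : 1 ≤ Uf (3 * (d + 1) + 4) (d + 1) := by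
      match d with
      | 0 =>
        show (1 : ℤ) ≤ Uf 7 1
        rw [Uf_succ, Uf_zero]
        norm_num [Nat.choose]
      | (d' + 1) =>
        obtain ⟨_, _, P1''⟩ := ih d' (by omega)
        have e1 : Uf (3 * (d' + 1) + 7) (d' + 2) =
            Uf (3 * (d' + 1) + 6) (d' + 2) + Uf (3 * (d' + 1) + 6) (d' + 1) := by
          rw [show 3 * (d' + 1) + 7 = (3 * (d' + 1) + 6) + 1 by ring, Uf_pascal]
        have e2 : Uf (3 * (d' + 1) + 6) (d' + 1) =
            Uf (3 * (d' + 1) + 5) (d' + 1) + Uf (3 * (d' + 1) + 5) d' := by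
          rw [show 3 * (d' + 1) + 6 = (3 * (d' + 1) + 5) + 1 by ring, Uf_pascal]
        have e3 : 1 ≤ Uf (3 * (d' + 1) + 5) d' := P1'' _ (by omega)
        have : Uf (3 * (d' + 1) + 6) (d' + 2) = -Uf (3 * (d' + 1) + 5) (d' + 1) := hU33
        rw [show 3 * (d' + 2) + 4 = 3 * (d' + 1) + 7 by ring, e1, this, e2]
        linarith
    have P1v : ∀ m, 3 * (d + 1) + 5 ≤ m → 1 ≤ Uf m (d + 1) := by
      intro m hm
      induction m, hm using Nat.le_induction with
      | base =>
        rw [show 3 * (d + 1) + 5 = (3 * (d + 1) + 4) + 1 by ring, Uf_pascal]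
        have := P1' (3 * (d + 1) + 4) (by omega)
        linarith [P0v]
      | succ m hm ihm =>
        rw [Uf_pascal]
        have := P1' m (by omega)
        linarith [ihm]
    exact ⟨N1, ⟨by linarith [P0v], fun _ => P0v⟩, P1v⟩

lemma g_eq_range (m d : ℕ) :
    g m d = ∑ i ∈ Finset.range (m - d), m.choose (d + 1 + i) * (d + i).choose d := by
  unfold g
  rw [← Finset.Ico_add_one_right_eq_Icc, Finset.sum_Ico_eq_sum_range]
  have h : m + 1 - (d + 1) = m - d := by omega
  rw [h]
  refine Finset.sum_congr rfl fun i _ => ?_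
  rw [show d + 1 + i - 1 = d + i by omega]

lemma g_zero (m : ℕ) : g m 0 = 2 ^ m - 1 := by
  rw [g_eq_range]
  have h := Nat.sum_range_choose m
  rw [Finset.sum_range_succ'] at h
  have e : ∑ i ∈ Finset.range (m - 0), m.choose (0 + 1 + i) * (0 + i).choose 0
      = ∑ i ∈ Finset.range m, m.choose (i + 1) := by
    apply Finset.sum_congr (by simp)
    intro i _
    rw [show 0 + 1 + i = i + 1 by omega, show (0 + i).choose 0 = 1 from Nat.choose_zero_right _,
      mul_one]
  rw [e]
  rw [Nat.choose_zero_right] at h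
  omega

lemma gg (m d : ℕ) (h : d + 1 ≤ m) :
    g m (d + 1) + g m d = 2 ^ (m - d - 1) * m.choose (d + 1) := by
  obtain ⟨e, he⟩ : ∃ e, m - d = e + 1 := ⟨m - d - 1, by omega⟩
  have h1 : m - (d + 1) = e := by omega
  have h2 : m - d - 1 = e := by omega
  rw [g_eq_range, g_eq_range, h1, h2, he]
  have first : ∑ i ∈ Finset.range e, m.choose (d + 1 + 1 + i) * (d + 1 + i).choose (d + 1)
      = ∑ i ∈ Finset.range (e + 1), m.choose (d + 1 + i) * (d + i).choose (d + 1) := by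
    rw [Finset.sum_range_succ']
    simp only [Nat.add_zero, Nat.choose_succ_self, mul_zero, add_zero]
    refine Finset.sum_congr rfl fun i _ => ?_
    rw [show d + 1 + 1 + i = d + 1 + (i + 1) by omega, show d + 1 + i = d + (i + 1) by omega]
  rw [first, ← Finset.sum_add_distrib]
  have second : ∀ i ∈ Finset.range (e + 1),
      m.choose (d + 1 + i) * (d + i).choose (d + 1) + m.choose (d + 1 + i) * (d + i).choose d
      = m.choose (d + 1) * e.choose i := by
    intro i hi
    rw [← Nat.mul_add, Nat.add_comm ((d + i).choose (d + 1)), ← Nat.choose_succ_succ' (d + i) d]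
    have h3 : d + i + 1 = d + 1 + i := by omega
    rw [h3]
    have h4 : d + 1 + i ≤ m := by
      have := Finset.mem_range.mp hi; omega
    have h5 := Nat.choose_mul (n := m) (show d + 1 ≤ d + 1 + i by omega)
    rw [h5, h1, show d + 1 + i - (d + 1) = i by omega]
  rw [Finset.sum_congr rfl second, ← Finset.mul_sum, Nat.sum_range_choose]
  ring

lemma key : ∀ d m, d + 1 ≤ m →
    (g m d : ℤ) * 2 = 2 ^ (m - d - 1) * ((m.choose (d + 1) : ℤ) - Uf m d) - 2 * (-1) ^ d := by
  intro d
  induction d with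
  | zero =>
    intro m hm
    obtain ⟨m', rfl⟩ : ∃ m', m = m' + 1 := ⟨m - 1, by omega⟩
    rw [g_zero, Uf_zero, Nat.choose_one_right]
    have h1 : m' + 1 - 0 - 1 = m' := by omega
    rw [h1]
    have h2 : (1 : ℕ) ≤ 2 ^ (m' + 1) := Nat.one_le_two_pow
    push_cast [h2]
    ring
  | succ d ihd =>
    intro m hm
    have hgg := gg m d (by omega)
    have hkey := ihd m (by omega)
    obtain ⟨e, he⟩ : ∃ e, m - d - 1 = e + 1 := ⟨m - d - 2, by omega⟩
    have h2 : m - (d + 1) - 1 = e := by omega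
    rw [h2, Uf_succ]
    rw [he] at hkey
    have hggz : (g m (d + 1) : ℤ) + g m d = 2 ^ (e + 1) * m.choose (d + 1) := by
      rw [he] at hgg; exact_mod_cast hgg
    push_cast at hggz hkey ⊢
    ring_nf at hggz hkey ⊢
    linarith

lemma g_diff (m d : ℕ) (h : d + 1 ≤ m) :
    (g m (d + 1) : ℤ) - g m d = 2 ^ (m - d - 1) * Uf m d + 2 * (-1) ^ d := by
  have hk := key d m h
  have hggz : (g m (d + 1) : ℤ) + g m d = 2 ^ (m - d - 1) * m.choose (d + 1) := by
    exact_mod_cast gg m d h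
  linarith

lemma step_up (m d : ℕ) (h : 3 * d + 4 ≤ m) : g m d < g m (d + 1) := by
  have hdf := g_diff m d (by omega)
  have hpow : (4 : ℤ) ≤ 2 ^ (m - d - 1) := by
    calc (4 : ℤ) = 2 ^ 2 := by norm_num
    _ ≤ 2 ^ (m - d - 1) := pow_le_pow_right₀ (by norm_num) (by omega)
  have hkey : 0 < (g m (d + 1) : ℤ) - g m d := by
    have hs : (-2 : ℤ) ≤ 2 * (-1) ^ d := by
      rcases Nat.even_or_odd d with hp | hp
      · rw [hp.neg_one_pow]; norm_num
      · rw [hp.neg_one_pow]; norm_num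
    rcases Nat.eq_zero_or_pos d with rfl | hd0
    · rcases eq_or_lt_of_le h with heq | hlt
      · rw [hdf, ← heq, Uf_zero]
        norm_num
      · have h1 : 1 ≤ Uf m 0 := (signs 0).2.2 m (by omega)
        have h4 : (4 : ℤ) ≤ 2 ^ (m - 0 - 1) * Uf m 0 :=
          le_trans hpow (le_mul_of_one_le_right (by positivity) h1)
        linarith
    · have h1 : 1 ≤ Uf m d := by
        rcases eq_or_lt_of_le h with heq | hlt
        · rw [← heq]; exact (signs d).2.1.2 hd0
        · exact (signs d).2.2 m (by omega)
      have h4 : (4 : ℤ) ≤ 2 ^ (m - d - 1) * Uf m d :=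
        le_trans hpow (le_mul_of_one_le_right (by positivity) h1)
      linarith
  have : (g m d : ℤ) < g m (d + 1) := by linarith
  exact_mod_cast this

lemma step_down (m d : ℕ) (h1 : d + 2 ≤ m) (h2 : m ≤ 3 * d + 3) : g m (d + 1) < g m d := by
  have hdf := g_diff m d (by omega)
  have hkey : (g m (d + 1) : ℤ) - g m d < 0 := by
    rcases eq_or_lt_of_le h1 with heq | hlt
    · rw [hdf, ← heq]
      have hE2 := (Uf_diag d).2
      have hme : d + 2 - d - 1 = 1 := by omega
      rw [hme, hE2]
      have : (2 : ℤ) ^ 1 * (-(d : ℤ) - 1 - (-1) ^ d) + 2 * (-1) ^ d = -2 * d - 2 := by ring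
      rw [this]
      have : (0 : ℤ) ≤ d := by positivity
      linarith
    · have hU : Uf m d ≤ -1 := (signs d).1 m h1 h2
      have hpow : (4 : ℤ) ≤ 2 ^ (m - d - 1) := by
        calc (4 : ℤ) = 2 ^ 2 := by norm_num
        _ ≤ 2 ^ (m - d - 1) := pow_le_pow_right₀ (by norm_num) (by omega)
      have h4 : 2 ^ (m - d - 1) * Uf m d ≤ -4 := by
        have := mul_le_mul_of_nonneg_left hU (show (0:ℤ) ≤ 2 ^ (m - d - 1) by positivity)
        linarith
      have hs : 2 * (-1 : ℤ) ^ d ≤ 2 := by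
        rcases Nat.even_or_odd d with hp | hp
        · rw [hp.neg_one_pow]; norm_num
        · rw [hp.neg_one_pow]; norm_num
      linarith
  have : (g m (d + 1) : ℤ) < g m d := by linarith
  exact_mod_cast this

end St17

/-- For `m ≥ 1`, the function `d ↦ g(m,d)` on `{0, …, m-1}` attains its
maximum at `d = ⌊(m-1)/3⌋` and at no other value. -/
theorem stmt17 (m : ℕ) (hm : 1 ≤ m) (d : ℕ) (hd : d ≤ m - 1) (hne : d ≠ (m - 1) / 3) :
    g m d < g m ((m - 1) / 3) := by
  set c := (m - 1) / 3 with hc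
  rcases lt_or_gt_of_ne hne with hlt | hgt
  · have H : ∀ e, e < c → g m e < g m (e + 1) := by
      intro e he
      exact St17.step_up m e (by omega)
    have chain : ∀ n, d + n < c → g m d < g m (d + n + 1) := by
      intro n
      induction n with
      | zero => intro hn; simpa using H d (by omega)
      | succ n ih =>
        intro hn
        have h1 := ih (by omega)
        have h2 := H (d + n + 1) (by omega)
        calc g m d < g m (d + n + 1) := h1
        _ < g m (d + n + 1 + 1) := h2
        _ = g m (d + (n + 1) + 1) := by ring_nf
    have := chain (c - d - 1) (by omega)
    rwa [show d + (c - d - 1) + 1 = c by omega] at this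
  · have H : ∀ e, c ≤ e → e + 1 ≤ m - 1 → g m (e + 1) < g m e := by
      intro e h1 h2
      exact St17.step_down m e (by omega) (by omega)
    have chain : ∀ n, 1 ≤ n → c + n ≤ m - 1 → g m (c + n) < g m c := by
      intro n
      induction n with
      | zero => omega
      | succ n ih =>
        intro _ hn
        rcases Nat.eq_zero_or_pos n with rfl | hn0
        · simpa using H c le_rfl (by omega)
        · have h1 := H (c + n) (by omega) (by omega)
          have h2 := ih (by omega) (by omega)
          calc g m (c + (n + 1)) = g m (c + n + 1) := by ring_nf
          _ < g m (c + n) := h1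
          _ < g m c := h2
    have := chain (d - c) (by omega) (by omega)
    rwa [show c + (d - c) = d by omega] at this
end

section
/- For all integers m and d with 1 ≤ d < m, one has g(m,d) + g(m,d-1) = 2^{m-d}·C(m,d). -/
/-- `g(m,d) + g(m,d-1) = 2^{m-d}·C(m,d)` for `1 ≤ d < m`. -/
theorem stmt18 (m d : ℕ) (h1 : 1 ≤ d) (h2 : d < m) :
    g m d + g m (d - 1) = 2 ^ (m - d) * m.choose d := by
  obtain ⟨e, rfl⟩ : ∃ e, d = e + 1 := ⟨d - 1, (Nat.succ_pred_eq_of_pos h1).symm⟩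
  obtain ⟨n, rfl⟩ : ∃ n, m = e + 1 + n := ⟨m - (e + 1), by omega⟩
  set m := e + 1 + n with hm
  simp only [Nat.add_sub_cancel, g]
  have hsplit : Finset.Icc (e + 1) m = insert (e + 1) (Finset.Icc (e + 2) m) := by
    ext x; simp [Finset.mem_Icc, Finset.mem_insert]; omega
  rw [hsplit, Finset.sum_insert (by simp [Finset.mem_Icc])]
  simp only [Nat.add_sub_cancel, Nat.choose_self, mul_one]
  have key : (∑ j ∈ Finset.Icc (e + 2) m, m.choose j * (j - 1).choose (e + 1)) +
      (m.choose (e + 1) + ∑ j ∈ Finset.Icc (e + 2) m, m.choose j * (j - 1).choose e) =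
      m.choose (e + 1) + ∑ j ∈ Finset.Icc (e + 2) m, m.choose j * j.choose (e + 1) := by
    rw [add_left_comm, ← Finset.sum_add_distrib]
    congr 1
    refine Finset.sum_congr rfl fun j hj => ?_
    simp only [Finset.mem_Icc] at hj
    obtain ⟨i, rfl⟩ : ∃ i, j = i + 1 := ⟨j - 1, by omega⟩
    simp only [Nat.add_sub_cancel, Nat.choose_succ_succ]
    ring
  rw [key]
  have h2 : ∀ j ∈ Finset.Icc (e + 2) m, m.choose j * j.choose (e + 1) =
      m.choose (e + 1) * n.choose (j - (e + 1)) := by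
    intro j hj
    simp only [Finset.mem_Icc] at hj
    rw [Nat.choose_mul (by omega)]
    congr 2
    omega
  rw [Finset.sum_congr rfl h2, ← Finset.mul_sum]
  have hre : Finset.Icc (e + 2) m = (Finset.Icc 1 n).map (addLeftEmbedding (e + 1)) := by
    rw [Finset.map_add_left_Icc]
  rw [hre, Finset.sum_map]
  simp only [addLeftEmbedding_apply, Nat.add_sub_cancel_left]
  have hsum : ∑ i ∈ Finset.Icc 1 n, n.choose i = 2 ^ n - 1 := by
    have h0 : Finset.range (n + 1) = insert 0 (Finset.Icc 1 n) := by
      ext x; simp [Finset.mem_Icc]; omega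
    have := Nat.sum_range_choose n
    rw [h0, Finset.sum_insert (by simp)] at this
    simp at this
    omega
  rw [hsum]
  have hexp : m - (e + 1) = n := by omega
  rw [hexp]
  have hp : 1 ≤ 2 ^ n := Nat.one_le_two_pow
  have h2n : (2:ℕ) ^ n = (2 ^ n - 1) + 1 := by omega
  conv_rhs => rw [h2n]
  rw [Nat.add_mul, one_mul, add_comm, mul_comm]
end

section
/- For all integers m and d with 1 ≤ d < m, one has Σ_{j=d}^{m} C(m,j)·C(j-1,d-1) = C(m,d) · ∫_0^1 d·x^{d-1}·(1+x)^{m-d} dx, where the integral is the Riemann/Lebesgue integral over [0,1]; equivalently, g(m,d-1)/C(m,d) = ∫_0^1 d·x^{d-1}·(1+x)^{m-d} dx. -/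

lemma key_nat (m d k : ℕ) (h1 : 1 ≤ d) (hdm : d ≤ m) (hk : k ≤ m - d) :
    (d + k) * (m.choose (d + k) * (d + k - 1).choose (d - 1)) =
      d * (m.choose d * (m - d).choose k) := by
  have hdk : d + k = Nat.succ (d - 1 + k) := by omega
  have h1' : (d + k) * (d + k - 1).choose (d - 1) = (d + k).choose d * d := by
    have := Nat.add_one_mul_choose_eq (d - 1 + k) (d - 1)
    rw [hdk]
    convert this using 3 <;> omega
  have h2' : m.choose (d + k) * (d + k).choose d = m.choose d * (m - d).choose k := by
    have := Nat.choose_mul (n := m) (k := d + k) (s := d) (by omega)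
    simpa using this
  calc (d + k) * (m.choose (d + k) * (d + k - 1).choose (d - 1))
      = m.choose (d + k) * ((d + k) * (d + k - 1).choose (d - 1)) := by ring
    _ = m.choose (d + k) * ((d + k).choose d * d) := by rw [h1']
    _ = (m.choose (d + k) * (d + k).choose d) * d := by ring
    _ = (m.choose d * (m - d).choose k) * d := by rw [h2']
    _ = _ := by ring

lemma integral_eq (d n : ℕ) (h1 : 1 ≤ d) :
    (∫ x in (0:ℝ)..1, (d : ℝ) * x ^ (d - 1) * (1 + x) ^ n) =
      ∑ k ∈ Finset.range (n + 1), (d : ℝ) * (n.choose k : ℝ) / (d + k) := by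
  have hi : ∀ x : ℝ, (d : ℝ) * x ^ (d - 1) * (1 + x) ^ n =
      ∑ k ∈ Finset.range (n + 1), ((d : ℝ) * (n.choose k : ℝ)) * x ^ (d - 1 + k) := by
    intro x
    rw [add_comm (1:ℝ) x, add_pow]
    rw [Finset.mul_sum]
    refine Finset.sum_congr rfl fun k _ => ?_
    rw [pow_add]
    ring
  simp_rw [hi]
  rw [intervalIntegral.integral_finset_sum]
  · refine Finset.sum_congr rfl fun k _ => ?_
    rw [intervalIntegral.integral_const_mul, integral_pow]
    rw [one_pow, zero_pow (by omega : d - 1 + k + 1 ≠ 0)]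
    have hc : ((d - 1 + k : ℕ) : ℝ) + 1 = (d : ℝ) + k := by
      push_cast [Nat.cast_sub h1]
      ring
    rw [hc]
    ring
  · intro k _
    exact (Continuous.intervalIntegrable (by continuity) _ _)

/-- `∑_{j=d}^{m} C(m,j)·C(j-1,d-1) = C(m,d) · ∫₀¹ d·x^{d-1}·(1+x)^{m-d} dx`;
equivalently `g(m,d-1)/C(m,d) = ∫₀¹ d·x^{d-1}·(1+x)^{m-d} dx`. -/
theorem stmt19 (m d : ℕ) (h1 : 1 ≤ d) (h2 : d < m) :
    ((∑ j ∈ Finset.Icc d m, m.choose j * (j - 1).choose (d - 1) : ℕ) : ℝ) =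
        (m.choose d : ℝ) * ∫ x in (0:ℝ)..1, (d : ℝ) * x ^ (d - 1) * (1 + x) ^ (m - d) ∧
      (g m (d - 1) : ℝ) / (m.choose d : ℝ) =
        ∫ x in (0:ℝ)..1, (d : ℝ) * x ^ (d - 1) * (1 + x) ^ (m - d) := by
  have hint := integral_eq d (m - d) h1
  have hC : (m.choose d : ℝ) ≠ 0 := by
    exact_mod_cast (Nat.choose_pos (le_of_lt h2)).ne'
  have hmain : ((∑ j ∈ Finset.Icc d m, m.choose j * (j - 1).choose (d - 1) : ℕ) : ℝ) =
      (m.choose d : ℝ) *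
        ∑ k ∈ Finset.range ((m - d) + 1), (d : ℝ) * ((m - d).choose k : ℝ) / (d + k) := by
    push_cast
    rw [← Finset.Ico_add_one_right_eq_Icc, Finset.sum_Ico_eq_sum_range]
    have hr : m + 1 - d = (m - d) + 1 := by omega
    rw [hr, Finset.mul_sum]
    refine Finset.sum_congr rfl fun k hk => ?_
    have hk' : k ≤ m - d := by
      have := Finset.mem_range.mp hk; omega
    have hR : ((d : ℝ) + k) * ((m.choose (d + k) : ℝ) * ((d + k - 1).choose (d - 1) : ℝ)) =
        (d : ℝ) * ((m.choose d : ℝ) * ((m - d).choose k : ℝ)) := by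
      exact_mod_cast key_nat m d k h1 (le_of_lt h2) hk'
    have hdk : ((d : ℝ) + k) ≠ 0 := by positivity
    field_simp
    linear_combination hR
  refine ⟨by rw [hint]; exact hmain, ?_⟩
  have hg : g m (d - 1) = ∑ j ∈ Finset.Icc d m, m.choose j * (j - 1).choose (d - 1) := by
    unfold g
    rw [show d - 1 + 1 = d from by omega]
  rw [hg, hint, hmain, mul_div_cancel_left₀ _ hC]
end
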